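/- arXiv:0809.3482 — 3 statements merged into one kernel-verified Lean document; each statement's English description precedes it below -/
import Mathlib

section
/- For every integer r ≥ 1 there is a constant C > 0 (depending only on r) such that for every prime p not dividing 6 with p ≡ 1 (mod r) and every γ ∈ 𝔽_p^×: | #{(a,b) ∈ 𝔽_p² : there exists c ∈ 𝔽_p with −16(4a³+27b²) = γ·c^r} − p²/r | ≤ C·p^{3/2}. -/
open Finset

namespace Statement11Aux

variable {p : ℕ} [hp : Fact p.Prime] {r : ℕ}

lemma mc_norm_le_one (χ : MulChar (ZMod p) ℂ) (x : ZMod p) : ‖χ x‖ ≤ 1 := by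
  rcases eq_or_ne x 0 with h | h
  · simp [h, MulChar.map_zero]
  · have hx : IsUnit x := Ne.isUnit h
    have h1 : (χ x) ^ (Fintype.card (ZMod p)ˣ) = 1 := by
      rw [← MulChar.pow_apply' χ (Fintype.card_pos (α := (ZMod p)ˣ)).ne' x,
        MulChar.pow_card_eq_one, MulChar.one_apply hx]
    exact le_of_eq (Complex.norm_eq_one_of_pow_eq_one h1 Fintype.card_ne_zero)

lemma jacobi_norm_le (χ ψ : MulChar (ZMod p) ℂ) (hχ : χ ≠ 1) (hψ : ψ ≠ 1) :
    ‖jacobiSum χ ψ‖ ≤ Real.sqrt p := by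
  have hp1 : (1 : ℝ) ≤ Real.sqrt p := by
    rw [show (1:ℝ) = Real.sqrt 1 by simp]
    exact Real.sqrt_le_sqrt (by exact_mod_cast hp.out.one_lt.le)
  rcases eq_or_ne (χ * ψ) 1 with h | h
  · have hψ' : ψ = χ⁻¹ := by
      rw [eq_inv_iff_mul_eq_one, mul_comm]; exact h
    rw [hψ', jacobiSum_nontrivial_inv hχ]
    calc ‖-χ (-1)‖ = ‖χ (-1)‖ := norm_neg _
    _ ≤ 1 := mc_norm_le_one χ (-1)
    _ ≤ _ := hp1
  · have hchar : ringChar ℂ ≠ ringChar (ZMod p) := by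
      rw [ringChar.eq_zero (R := ℂ), ZMod.ringChar_zmod_n]
      exact fun hh => hp.out.ne_zero hh.symm
    have key := jacobiSum_mul_jacobiSum_inv hchar hχ hψ h
    have hstar : jacobiSum χ⁻¹ ψ⁻¹ = star (jacobiSum χ ψ) := by
      simp only [jacobiSum, star_sum, star_mul', MulChar.star_apply']
    rw [hstar] at key
    have hn : ‖jacobiSum χ ψ‖ * ‖jacobiSum χ ψ‖ = p := by
      have := congrArg norm key
      rwa [norm_mul, norm_star, Complex.norm_natCast, ZMod.card] at this
    have : ‖jacobiSum χ ψ‖ = Real.sqrt p := by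
      rw [← hn]; exact (Real.sqrt_mul_self (norm_nonneg _)).symm
    exact this.le

lemma rpow32 (hpos : 0 < p) : (p : ℝ) ^ ((3:ℝ)/2) = p * Real.sqrt p := by
  have hppos : (0:ℝ) < p := by exact_mod_cast hpos
  calc (p:ℝ)^((3:ℝ)/2) = (p:ℝ)^((1:ℝ) + 1/2) := by norm_num
  _ = (p:ℝ)^(1:ℝ) * (p:ℝ)^((1:ℝ)/2) := Real.rpow_add hppos 1 (1/2)
  _ = p * Real.sqrt p := by rw [Real.rpow_one, ← Real.sqrt_eq_rpow]


lemma inner_sum_bound (hp2 : p ≠ 2) (h27 : (27 : ZMod p) ≠ 0)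
    (ψ : MulChar (ZMod p) ℂ) (hψ : ψ ≠ 1) (u : ZMod p) :
    ‖∑ b : ZMod p, ψ (u + 27 * b ^ 2)‖ ≤ (if u = 0 then (p : ℝ) else Real.sqrt p) := by
  rcases eq_or_ne u 0 with hu | hu
  · rw [if_pos hu]
    calc ‖∑ b : ZMod p, ψ (u + 27 * b ^ 2)‖ ≤ ∑ b : ZMod p, ‖ψ (u + 27 * b ^ 2)‖ :=
          norm_sum_le _ _
    _ ≤ ∑ _b : ZMod p, (1:ℝ) := Finset.sum_le_sum fun b _ => mc_norm_le_one ψ _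
    _ = p := by simp [ZMod.card]
  · rw [if_neg hu]
    set η : MulChar (ZMod p) ℂ := (quadraticChar (ZMod p)).ringHomComp (Int.castRingHom ℂ)
      with hηdef
    have hringchar : ringChar (ZMod p) ≠ 2 := by
      rw [ZMod.ringChar_zmod_n]; exact_mod_cast hp2
    have hη : η ≠ 1 :=
      (MulChar.ringHomComp_ne_one_iff (Int.cast_injective (α := ℂ))).mpr
        (quadraticChar_ne_one hringchar)
    -- Step A: rewrite as sum over t weighted by number of square roots
    have key : ∀ t : ZMod p,
        (((univ.filter (fun b : ZMod p => b^2 = t)).card : ℂ)) = η t + 1 := by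
      intro t
      have h1 := quadraticChar_card_sqrts hringchar t
      have h2 : ({x : ZMod p | x ^ 2 = t}).toFinset = univ.filter (fun b => b^2 = t) := by
        simp [Set.toFinset_setOf]
      rw [h2] at h1
      have : ((univ.filter (fun b : ZMod p => b^2 = t)).card : ℤ) =
          quadraticChar (ZMod p) t + 1 := h1
      have h3 := congrArg (fun z : ℤ => (z : ℂ)) this
      simpa [hηdef, MulChar.ringHomComp_apply] using h3
    have stepA : ∑ b : ZMod p, ψ (u + 27 * b ^ 2) =
        ∑ t : ZMod p, (η t + 1) * ψ (u + 27 * t) := by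
      rw [Finset.sum_comp (fun t => ψ (u + 27 * t)) (fun b : ZMod p => b ^ 2)]
      rw [Finset.sum_subset (Finset.subset_univ
        (univ.image (fun b : ZMod p => b ^ 2)))]
      · refine Finset.sum_congr rfl fun t _ => ?_
        rw [nsmul_eq_mul, key t]
      · intro t _ ht
        have : (univ.filter (fun b : ZMod p => b ^ 2 = t)) = ∅ := by
          rw [Finset.filter_eq_empty_iff]
          intro b _ hb
          exact ht (Finset.mem_image.mpr ⟨b, Finset.mem_univ b, hb⟩)
        rw [this]
        simp
    have stepB : ∑ t : ZMod p, (η t + 1) * ψ (u + 27 * t) =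
        (∑ t : ZMod p, η t * ψ (u + 27 * t)) + ∑ t : ZMod p, ψ (u + 27 * t) := by
      rw [← Finset.sum_add_distrib]
      exact Finset.sum_congr rfl fun t _ => by ring
    have stepC : ∑ t : ZMod p, ψ (u + 27 * t) = 0 := by
      have hbij : Function.Bijective (fun t : ZMod p => u + 27 * t) := by
        refine Finite.injective_iff_bijective.mp fun x y hxy => ?_
        exact mul_left_cancel₀ h27 (add_left_cancel hxy)
      rw [Fintype.sum_bijective _ hbij _ (fun s => ψ s) (fun t => rfl)]
      exact MulChar.sum_eq_zero_of_ne_one hψ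
    -- Step D: the twisted sum equals (unit) * jacobiSum η ψ
    have hu27 : (27 : ZMod p)⁻¹ * u ≠ 0 := by
      simp [hu, h27, inv_ne_zero]
    have stepD : ∑ t : ZMod p, η t * ψ (u + 27 * t) =
        η ((27 : ZMod p)⁻¹ * u) * ψ u * ∑ s : ZMod p, η s * ψ (1 + s) := by
      have hbij : Function.Bijective (fun s : ZMod p => (27 : ZMod p)⁻¹ * u * s) :=
        (mulLeft_bijective₀ _ hu27)
      rw [← Fintype.sum_bijective _ hbij
        (fun s => η ((27:ZMod p)⁻¹ * u * s) * ψ (u + 27 * ((27:ZMod p)⁻¹ * u * s)))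
        (fun t => η t * ψ (u + 27 * t)) (fun s => rfl)]
      rw [Finset.mul_sum]
      refine Finset.sum_congr rfl fun s _ => ?_
      have h1 : (27 : ZMod p) * ((27:ZMod p)⁻¹ * u * s) = u * s := by
        field_simp
      rw [h1]
      have h2 : u + u * s = u * (1 + s) := by ring
      rw [h2, map_mul η, map_mul ψ]
      ring
    have stepE : ∑ s : ZMod p, η s * ψ (1 + s) = η (-1) * jacobiSum η ψ := by
      rw [jacobiSum, Finset.mul_sum]
      have hbij : Function.Bijective (fun s : ZMod p => -s) := neg_involutive.bijective
      rw [← Fintype.sum_bijective _ hbij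
        (fun s => η (-1) * (η (-s) * ψ (1 - -s)))
        (fun x => η (-1) * (η x * ψ (1 - x))) (fun s => by simp)]
      refine Finset.sum_congr rfl fun s _ => ?_
      have : η (-s) = η (-1) * η s := by rw [← map_mul]; ring_nf
      rw [this, sub_neg_eq_add]
      have h4 : η (-1) * η (-1) = 1 := by
        rw [← map_mul η]
        simp
      calc η s * ψ (1 + s) = (η (-1) * η (-1)) * (η s * ψ (1 + s)) := by rw [h4]; ring
      _ = η (-1) * (η (-1) * η s * ψ (1 + s)) := by ring
    rw [stepA, stepB, stepC, add_zero, stepD, stepE]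
    calc ‖η ((27:ZMod p)⁻¹ * u) * ψ u * (η (-1) * jacobiSum η ψ)‖
        = ‖η ((27:ZMod p)⁻¹ * u)‖ * ‖ψ u‖ * (‖η (-1)‖ * ‖jacobiSum η ψ‖) := by
          rw [norm_mul, norm_mul, norm_mul]
    _ ≤ 1 * 1 * (1 * Real.sqrt p) := by
        have h5 := jacobi_norm_le η ψ hη hψ
        gcongr <;> first | exact mc_norm_le_one _ _ | exact h5
    _ = Real.sqrt p := by ring

lemma total_bound (hp2 : p ≠ 2) (h27 : (27 : ZMod p) ≠ 0) (h4 : (4 : ZMod p) ≠ 0)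
    (ψ : MulChar (ZMod p) ℂ) (hψ : ψ ≠ 1) :
    ‖∑ ab : ZMod p × ZMod p, ψ (4 * ab.1 ^ 3 + 27 * ab.2 ^ 2)‖ ≤
      2 * (p : ℝ) ^ ((3:ℝ)/2) := by
  have hsqrt1 : (1:ℝ) ≤ Real.sqrt p := by
    rw [show (1:ℝ) = Real.sqrt 1 by simp]
    exact Real.sqrt_le_sqrt (by exact_mod_cast hp.out.one_lt.le)
  have hsqrt0 : (0:ℝ) ≤ Real.sqrt p := Real.sqrt_nonneg _
  calc ‖∑ ab : ZMod p × ZMod p, ψ (4 * ab.1 ^ 3 + 27 * ab.2 ^ 2)‖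
      = ‖∑ a : ZMod p, ∑ b : ZMod p, ψ (4 * a ^ 3 + 27 * b ^ 2)‖ := by
        rw [Fintype.sum_prod_type]
  _ ≤ ∑ a : ZMod p, ‖∑ b : ZMod p, ψ (4 * a ^ 3 + 27 * b ^ 2)‖ := norm_sum_le _ _
  _ ≤ ∑ a : ZMod p, (if a = 0 then (p:ℝ) else Real.sqrt p) := by
      refine Finset.sum_le_sum fun a _ => ?_
      have h := inner_sum_bound hp2 h27 ψ hψ (4 * a ^ 3)
      rcases eq_or_ne a 0 with ha | ha
      · subst ha
        simpa using h
      · have hne : (4 : ZMod p) * a ^ 3 ≠ 0 := by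
          exact mul_ne_zero h4 (pow_ne_zero 3 ha)
        rw [if_neg hne] at h
        rw [if_neg ha]
        exact h
  _ = (p:ℝ) + ((p:ℝ) - 1) * Real.sqrt p := by
      rw [Finset.sum_ite]
      have hc1 : (univ.filter (fun a : ZMod p => a = 0)).card = 1 := by
        simp [Finset.filter_eq']
      have hc2 : (univ.filter (fun a : ZMod p => ¬ a = 0)).card = p - 1 := by
        have := Finset.card_filter_add_card_filter_not
          (s := (univ : Finset (ZMod p))) (p := fun a => a = 0)
        rw [Finset.card_univ, ZMod.card] at this
        omega
      rw [Finset.sum_const, Finset.sum_const, hc1, hc2]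
      have hp1 : 1 ≤ p := hp.out.one_lt.le
      simp only [nsmul_eq_mul, one_mul]
      rw [Nat.cast_sub hp1]
      push_cast
      ring
  _ ≤ 2 * (p : ℝ) ^ ((3:ℝ)/2) := by
      rw [rpow32 hp.out.pos]
      have hple : (p:ℝ) ≤ (p:ℝ) * Real.sqrt p := by
        nlinarith [Nat.cast_nonneg (α := ℝ) p]
      nlinarith [Nat.cast_nonneg (α := ℝ) p]

lemma exists_prim_root_F (hr : 1 ≤ r) (hdvd : r ∣ p - 1) :
    ∃ ζ : ZMod p, IsPrimitiveRoot ζ r := by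
  obtain ⟨g, hg⟩ := IsCyclic.exists_generator (α := (ZMod p)ˣ)
  have hog : orderOf g = p - 1 := by
    rw [orderOf_eq_card_of_forall_mem_zpowers hg, Nat.card_eq_fintype_card,
      ZMod.card_units_eq_totient, Nat.totient_prime hp.out]
  have hp1 : p - 1 ≠ 0 := by
    have := hp.out.one_lt; omega
  refine ⟨((g ^ ((p - 1) / r) : (ZMod p)ˣ) : ZMod p), ?_⟩
  rw [IsPrimitiveRoot.coe_units_iff]
  have horder : orderOf (g ^ ((p - 1) / r)) = r := by
    rw [orderOf_pow, hog, Nat.gcd_comm, Nat.gcd_eq_left (Nat.div_dvd_of_dvd hdvd),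
      Nat.div_div_self hdvd hp1]
  have := IsPrimitiveRoot.orderOf (g ^ ((p - 1) / r))
  rwa [horder] at this

lemma card_pow_eq_one (hr : 1 ≤ r) (hdvd : r ∣ p - 1) :
    (univ.filter fun x : ZMod p => x ^ r = 1).card = r := by
  obtain ⟨ζ, hζ⟩ := exists_prim_root_F hr hdvd
  have : (univ.filter fun x : ZMod p => x ^ r = 1) = Polynomial.nthRootsFinset r (1 : ZMod p) := by
    ext x
    simp [Polynomial.mem_nthRootsFinset hr]
  rw [this, hζ.card_nthRootsFinset]

lemma card_pow_eq (hr : 1 ≤ r) (hdvd : r ∣ p - 1) {u c₀ : ZMod p} (hu : u ≠ 0)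
    (hc₀ : c₀ ^ r = u) :
    (univ.filter fun c : ZMod p => c ^ r = u).card = r := by
  have hc₀ne : c₀ ≠ 0 := by
    intro h; rw [h, zero_pow (by omega)] at hc₀; exact hu hc₀.symm
  have hbij : (univ.filter fun c : ZMod p => c ^ r = u).card
      = (univ.filter fun x : ZMod p => x ^ r = 1).card := by
    apply Finset.card_bij' (fun c _ => c₀⁻¹ * c) (fun x _ => c₀ * x)
    · intro c hc
      simp only [Finset.mem_filter, Finset.mem_univ, true_and] at hc ⊢
      rw [mul_pow, hc, ← hc₀, inv_pow, inv_mul_cancel₀ (pow_ne_zero r hc₀ne)]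
    · intro x hx
      simp only [Finset.mem_filter, Finset.mem_univ, true_and] at hx ⊢
      rw [mul_pow, hx, mul_one, hc₀]
    · intro c _; field_simp
    · intro x _; field_simp
  rw [hbij, card_pow_eq_one hr hdvd]

lemma pow_surj_of_char_eq_one {χ : MulChar (ZMod p) ℂ} (hr : 1 ≤ r)
    (horder : orderOf χ = r) {u : ZMod p} (hu : u ≠ 0) (h1 : χ u = 1) :
    ∃ c : ZMod p, c ^ r = u := by
  obtain ⟨g, hg⟩ := IsCyclic.exists_generator (α := (ZMod p)ˣ)
  -- order of χ g is r
  have key : ∀ x : (ZMod p)ˣ, ∃ k : ℕ, x = g ^ k := by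
    intro x
    have := ((isOfFinOrder_of_finite g).mem_powers_iff_mem_zpowers).mpr (hg x)
    obtain ⟨k, hk⟩ := this
    exact ⟨k, hk.symm⟩
  have hχr : χ ^ r = 1 := by rw [← horder]; exact pow_orderOf_eq_one χ
  have hordg : orderOf (χ (g : ZMod p)) = r := by
    have h2 : (χ (g : ZMod p)) ^ r = 1 := by
      rw [← MulChar.pow_apply_coe, hχr, MulChar.one_apply_coe]
    have hdvd1 : orderOf (χ (g : ZMod p)) ∣ r := orderOf_dvd_of_pow_eq_one h2
    have hdvd2 : r ∣ orderOf (χ (g : ZMod p)) := by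
      rw [← horder]
      apply orderOf_dvd_of_pow_eq_one
      apply MulChar.ext
      intro x
      obtain ⟨k, hk⟩ := key x
      rw [MulChar.pow_apply_coe, MulChar.one_apply_coe, hk]
      push_cast
      rw [map_pow, ← pow_mul, mul_comm, pow_mul, pow_orderOf_eq_one, one_pow]
    exact Nat.dvd_antisymm hdvd1 hdvd2
  obtain ⟨k, hk⟩ := key (Ne.isUnit hu).unit
  have hu' : u = ((g : (ZMod p)ˣ) ^ k : (ZMod p)ˣ) := by
    rw [← hk, IsUnit.unit_spec]
  have hχu : χ ((g : ZMod p)) ^ k = 1 := by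
    rw [← map_pow]
    push_cast at hu'
    rw [← hu', h1]
  have hrk : r ∣ k := hordg ▸ orderOf_dvd_of_pow_eq_one hχu
  obtain ⟨m, rfl⟩ := hrk
  refine ⟨((g ^ m : (ZMod p)ˣ) : ZMod p), ?_⟩
  rw [hu']
  push_cast
  rw [← pow_mul, mul_comm]

lemma cnt_eq (hr : 1 ≤ r) (hdvd : r ∣ p - 1) {χ : MulChar (ZMod p) ℂ}
    (horder : orderOf χ = r) (u : ZMod p) :
    ((univ.filter fun c : ZMod p => c ^ r = u).card : ℂ)
      = (if u = 0 then 1 else 0) + ∑ j ∈ range r, (χ ^ j) u := by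
  rcases eq_or_ne u 0 with hu | hu
  · subst hu
    rw [if_pos rfl]
    have h1 : (univ.filter fun c : ZMod p => c ^ r = 0) = {0} := by
      ext c
      simp [pow_eq_zero_iff (by omega : r ≠ 0)]
    rw [h1]
    have h2 : ∀ j ∈ range r, (χ ^ j) (0 : ZMod p) = 0 := fun j _ =>
      MulChar.map_nonunit _ not_isUnit_zero
    rw [Finset.sum_congr rfl h2]
    simp
  · rw [if_neg hu, zero_add]
    have hχr : χ ^ r = 1 := by rw [← horder]; exact pow_orderOf_eq_one χ
    have hχu : χ u ^ r = 1 := by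
      rw [← MulChar.pow_apply' χ (by omega : r ≠ 0), hχr, MulChar.one_apply (Ne.isUnit hu)]
    have hsum : ∑ j ∈ range r, (χ ^ j) u = ∑ j ∈ range r, (χ u) ^ j := by
      refine Finset.sum_congr rfl fun j _ => ?_
      rcases Nat.eq_zero_or_pos j with hj | hj
      · subst hj; simp [MulChar.one_apply (Ne.isUnit hu)]
      · exact MulChar.pow_apply' χ (by omega) u
    rw [hsum]
    by_cases hex : ∃ c : ZMod p, c ^ r = u
    · obtain ⟨c₀, hc₀⟩ := hex
      rw [card_pow_eq hr hdvd hu hc₀]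
      have hχu1 : χ u = 1 := by
        rw [← hc₀, map_pow, ← MulChar.pow_apply' χ (by omega : r ≠ 0), hχr]
        have hc₀ne : c₀ ≠ 0 := by
          intro h; rw [h, zero_pow (by omega : r ≠ 0)] at hc₀; exact hu hc₀.symm
        exact MulChar.one_apply (Ne.isUnit hc₀ne)
      rw [hχu1]
      simp
    · have h0 : (univ.filter fun c : ZMod p => c ^ r = u) = ∅ := by
        rw [Finset.filter_eq_empty_iff]
        exact fun c _ hc => hex ⟨c, hc⟩
      rw [h0]
      have hne1 : χ u ≠ 1 := fun h =>
        hex (pow_surj_of_char_eq_one hr horder hu h)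
      rw [geom_sum_eq hne1, hχu]
      simp

lemma N0_le (h4 : (4 : ZMod p) ≠ 0) :
    (univ.filter fun ab : ZMod p × ZMod p => 4 * ab.1 ^ 3 + 27 * ab.2 ^ 2 = 0).card
      ≤ 3 * p := by
  rw [Finset.card_eq_sum_card_fiberwise
    (f := fun ab : ZMod p × ZMod p => ab.2) (t := univ) (fun x _ => mem_univ _)]
  have hbound : ∀ b : ZMod p,
      ((univ.filter fun ab : ZMod p × ZMod p => 4 * ab.1 ^ 3 + 27 * ab.2 ^ 2 = 0)
        |>.filter fun ab => ab.2 = b).card ≤ 3 := by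
    intro b
    set d : ZMod p := (4 : ZMod p)⁻¹ * (-(27 * b ^ 2)) with hd
    have hsub : ((univ.filter fun ab : ZMod p × ZMod p => 4 * ab.1 ^ 3 + 27 * ab.2 ^ 2 = 0)
        |>.filter fun ab => ab.2 = b) ⊆
        (Polynomial.nthRoots 3 d).toFinset ×ˢ {b} := by
      intro ab hab
      simp only [Finset.mem_filter, Finset.mem_univ, true_and] at hab
      obtain ⟨h1, h2⟩ := hab
      rw [Finset.mem_product, Multiset.mem_toFinset,
        Polynomial.mem_nthRoots (by norm_num : 0 < 3)]
      subst h2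
      constructor
      · rw [hd]
        field_simp
        linear_combination h1
      · exact Finset.mem_singleton_self _
    calc _ ≤ ((Polynomial.nthRoots 3 d).toFinset ×ˢ ({b} : Finset (ZMod p))).card :=
          Finset.card_le_card hsub
    _ ≤ 3 := by
        rw [Finset.card_product, Finset.card_singleton, mul_one]
        exact le_trans (Multiset.toFinset_card_le _) (by simpa using Polynomial.card_nthRoots 3 d)
  calc _ ≤ ∑ _b : ZMod p, 3 := Finset.sum_le_sum fun b _ => hbound b
  _ = 3 * p := by simp [ZMod.card, mul_comm]

lemma count_relation (hr : 1 ≤ r) (hdvd : r ∣ p - 1)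
    (card_pow_eq : ∀ {u c₀ : ZMod p}, u ≠ 0 → c₀ ^ r = u →
      (univ.filter fun c : ZMod p => c ^ r = u).card = r)
    (γ : (ZMod p)ˣ) (δ : ZMod p × ZMod p → ZMod p) :
    r * (univ.filter fun ab : ZMod p × ZMod p => ∃ c : ZMod p, δ ab = (γ : ZMod p) * c ^ r).card
      = (∑ ab : ZMod p × ZMod p,
          (univ.filter fun c : ZMod p => c ^ r = ((γ : ZMod p))⁻¹ * δ ab).card)
        + (r - 1) * (univ.filter fun ab : ZMod p × ZMod p => δ ab = 0).card := by
  have hγ : (γ : ZMod p) ≠ 0 := γ.ne_zero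
  have key : ∀ ab : ZMod p × ZMod p,
      r * (if (∃ c : ZMod p, δ ab = (γ : ZMod p) * c ^ r) then 1 else 0)
        = (univ.filter fun c : ZMod p => c ^ r = ((γ : ZMod p))⁻¹ * δ ab).card
          + (r - 1) * (if δ ab = 0 then 1 else 0) := by
    intro ab
    have hiff : (∃ c : ZMod p, δ ab = (γ : ZMod p) * c ^ r)
        ↔ ∃ c : ZMod p, c ^ r = ((γ : ZMod p))⁻¹ * δ ab := by
      constructor
      · rintro ⟨c, hc⟩
        exact ⟨c, by rw [hc]; field_simp⟩
      · rintro ⟨c, hc⟩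
        refine ⟨c, ?_⟩
        rw [hc]
        field_simp
    rcases eq_or_ne (δ ab) 0 with h0 | h0
    · have hfil : (univ.filter fun c : ZMod p => c ^ r = ((γ : ZMod p))⁻¹ * δ ab) = {0} := by
        ext c
        simp only [Finset.mem_filter, Finset.mem_univ, true_and, Finset.mem_singleton, h0,
          mul_zero]
        exact pow_eq_zero_iff (by omega : r ≠ 0)
      rw [hfil, if_pos h0, if_pos ⟨0, by rw [h0, zero_pow (by omega : r ≠ 0), mul_zero]⟩]
      simp only [Finset.card_singleton]
      omega
    · have hu : ((γ : ZMod p))⁻¹ * δ ab ≠ 0 := mul_ne_zero (inv_ne_zero hγ) h0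
      rw [if_neg h0]
      by_cases hex : ∃ c : ZMod p, δ ab = (γ : ZMod p) * c ^ r
      · obtain ⟨c, hc⟩ := hiff.mp hex
        rw [if_pos hex, card_pow_eq hu hc]
        omega
      · have hfil : (univ.filter fun c : ZMod p => c ^ r = ((γ : ZMod p))⁻¹ * δ ab) = ∅ := by
          rw [Finset.filter_eq_empty_iff]
          exact fun c _ hc => hex (hiff.mpr ⟨c, hc⟩)
        rw [if_neg hex, hfil]
        simp
  rw [Finset.card_filter, Finset.card_filter, Finset.mul_sum, Finset.mul_sum,
    ← Finset.sum_add_distrib]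
  exact Finset.sum_congr rfl fun ab _ => key ab

lemma T_estimate (hr : 1 ≤ r) (hdvd : r ∣ p - 1) (hp2 : p ≠ 2)
    (h27 : (27 : ZMod p) ≠ 0) (h4 : (4 : ZMod p) ≠ 0) (h16 : (-16 : ZMod p) ≠ 0)
    {χ : MulChar (ZMod p) ℂ} (horder : orderOf χ = r) (γ : (ZMod p)ˣ) :
    |((∑ ab : ZMod p × ZMod p,
        (univ.filter fun c : ZMod p =>
          c ^ r = ((γ : ZMod p))⁻¹ * (-16 * (4 * ab.1 ^ 3 + 27 * ab.2 ^ 2))).card : ℝ))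
      - (p:ℝ)^2| ≤ ((r:ℝ) - 1) * (2 * (p : ℝ) ^ ((3:ℝ)/2)) := by
  have hγ : (γ : ZMod p) ≠ 0 := γ.ne_zero
  set δ : ZMod p × ZMod p → ZMod p :=
    fun ab => -16 * (4 * ab.1 ^ 3 + 27 * ab.2 ^ 2) with hδ
  set w : ZMod p × ZMod p → ZMod p :=
    fun ab => 4 * ab.1 ^ 3 + 27 * ab.2 ^ 2 with hw
  set N0 : ℕ := (univ.filter fun ab : ZMod p × ZMod p => δ ab = 0).card with hN0
  -- complex computation
  have hcast : ((∑ ab : ZMod p × ZMod p,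
      (univ.filter fun c : ZMod p => c ^ r = ((γ : ZMod p))⁻¹ * δ ab).card : ℕ) : ℂ)
      = (p:ℂ)^2 + ∑ j ∈ Finset.Ico 1 r, ((χ ^ j) (((γ : ZMod p))⁻¹ * -16) *
          ∑ ab : ZMod p × ZMod p, (χ ^ j) (w ab)) := by
    push_cast
    rw [Finset.sum_congr rfl (fun ab _ => cnt_eq hr hdvd horder (((γ : ZMod p))⁻¹ * δ ab))]
    rw [Finset.sum_add_distrib]
    have hzero : ∀ ab : ZMod p × ZMod p, (((γ : ZMod p))⁻¹ * δ ab = 0) ↔ δ ab = 0 := by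
      intro ab
      constructor
      · intro h
        rcases mul_eq_zero.mp h with h | h
        · exact absurd h (inv_ne_zero hγ)
        · exact h
      · intro h; rw [h, mul_zero]
    have e1 : ∑ ab : ZMod p × ZMod p,
        (if ((γ : ZMod p))⁻¹ * δ ab = 0 then (1:ℂ) else 0) = (N0 : ℂ) := by
      rw [hN0, Finset.card_filter]
      push_cast
      exact Finset.sum_congr rfl fun ab _ => by rw [if_congr (hzero ab) rfl rfl]
    rw [e1]
    -- swap sums
    rw [Finset.sum_comm]
    -- split off j = 0
    have hsplit : ∀ f : ℕ → ℂ, ∑ j ∈ range r, f j = f 0 + ∑ j ∈ Finset.Ico 1 r, f j := by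
      intro f
      rw [Finset.range_eq_Ico, ← Finset.sum_eq_sum_Ico_succ_bot (by omega : 0 < r)]
    rw [hsplit]
    have e2 : ∑ ab : ZMod p × ZMod p, (χ ^ 0) (((γ : ZMod p))⁻¹ * δ ab)
        = (p:ℂ)^2 - (N0 : ℂ) := by
      have : ∀ ab : ZMod p × ZMod p, (χ ^ 0) (((γ : ZMod p))⁻¹ * δ ab)
          = 1 - (if δ ab = 0 then (1:ℂ) else 0) := by
        intro ab
        rcases eq_or_ne (δ ab) 0 with h | h
        · rw [if_pos h, h, mul_zero, pow_zero, MulChar.map_zero]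
          ring
        · rw [if_neg h, pow_zero, MulChar.one_apply (Ne.isUnit (mul_ne_zero (inv_ne_zero hγ) h))]
          ring
      rw [Finset.sum_congr rfl fun ab _ => this ab, Finset.sum_sub_distrib]
      have hcard : ((univ : Finset (ZMod p × ZMod p)).card : ℂ) = (p:ℂ)^2 := by
        rw [Finset.card_univ, Fintype.card_prod, ZMod.card]
        push_cast; ring
      rw [← hcard, hN0, Finset.card_filter]
      push_cast
      simp
    rw [e2]
    have e3 : ∀ j ∈ Finset.Ico 1 r, ∑ ab : ZMod p × ZMod p, (χ ^ j) (((γ : ZMod p))⁻¹ * δ ab)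
        = (χ ^ j) (((γ : ZMod p))⁻¹ * -16) * ∑ ab : ZMod p × ZMod p, (χ ^ j) (w ab) := by
      intro j _
      rw [Finset.mul_sum]
      refine Finset.sum_congr rfl fun ab _ => ?_
      rw [← map_mul]
      congr 1
      rw [hδ, hw]
      ring
    rw [Finset.sum_congr rfl e3]
    ring
  -- now take norms
  have hkey : ‖∑ j ∈ Finset.Ico 1 r, ((χ ^ j) (((γ : ZMod p))⁻¹ * -16) *
      ∑ ab : ZMod p × ZMod p, (χ ^ j) (w ab))‖ ≤ ((r:ℝ) - 1) * (2 * (p : ℝ) ^ ((3:ℝ)/2)) := by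
    calc ‖∑ j ∈ Finset.Ico 1 r, ((χ ^ j) (((γ : ZMod p))⁻¹ * -16) *
        ∑ ab : ZMod p × ZMod p, (χ ^ j) (w ab))‖
        ≤ ∑ j ∈ Finset.Ico 1 r, ‖(χ ^ j) (((γ : ZMod p))⁻¹ * -16) *
            ∑ ab : ZMod p × ZMod p, (χ ^ j) (w ab)‖ := norm_sum_le _ _
    _ ≤ ∑ _j ∈ Finset.Ico 1 r, 2 * (p : ℝ) ^ ((3:ℝ)/2) := by
        refine Finset.sum_le_sum fun j hj => ?_
        rw [Finset.mem_Ico] at hj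
        have hψ : (χ ^ j) ≠ 1 := by
          intro h
          have := orderOf_dvd_of_pow_eq_one h
          rw [horder] at this
          have := Nat.le_of_dvd (by omega) this
          omega
        rw [norm_mul]
        have h1 := mc_norm_le_one (χ ^ j) (((γ : ZMod p))⁻¹ * -16)
        have hb := total_bound hp2 h27 h4 (χ ^ j) hψ
        have hrpow : (0:ℝ) ≤ 2 * (p : ℝ) ^ ((3:ℝ)/2) := by positivity
        calc ‖(χ ^ j) (((γ : ZMod p))⁻¹ * -16)‖ * ‖∑ ab : ZMod p × ZMod p, (χ ^ j) (w ab)‖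
            ≤ 1 * (2 * (p : ℝ) ^ ((3:ℝ)/2)) :=
              mul_le_mul h1 hb (norm_nonneg _) zero_le_one
        _ = 2 * (p : ℝ) ^ ((3:ℝ)/2) := one_mul _
    _ = ((r:ℝ) - 1) * (2 * (p : ℝ) ^ ((3:ℝ)/2)) := by
        rw [Finset.sum_const, Nat.card_Ico]
        rw [nsmul_eq_mul, Nat.cast_sub hr]
        push_cast; ring
  -- transfer to ℝ
  set T : ℕ := ∑ ab : ZMod p × ZMod p,
      (univ.filter fun c : ZMod p => c ^ r = ((γ : ZMod p))⁻¹ * δ ab).card with hT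
  have habs : |((T:ℝ) - (p:ℝ)^2)| = ‖((((T:ℝ) - (p:ℝ)^2 : ℝ)) : ℂ)‖ :=
    (Complex.norm_real _).symm
  have hTC : ((((T:ℝ) - (p:ℝ)^2 : ℝ)) : ℂ) = ∑ j ∈ Finset.Ico 1 r,
      ((χ ^ j) (((γ : ZMod p))⁻¹ * -16) * ∑ ab : ZMod p × ZMod p, (χ ^ j) (w ab)) := by
    push_cast
    rw [sub_eq_iff_eq_add]
    push_cast at hcast
    rw [hcast]
    ring
  have hTR : (T : ℝ) = ∑ ab : ZMod p × ZMod p,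
      ((univ.filter fun c : ZMod p =>
        c ^ r = ((γ : ZMod p))⁻¹ * (-16 * (4 * ab.1 ^ 3 + 27 * ab.2 ^ 2))).card : ℝ) := by
    rw [hT]; push_cast; rfl
  rw [← hTR, habs, hTC]
  exact hkey

end Statement11Aux

/-- For every `r ≥ 1` there is a constant `C > 0` such that for every prime
`p ∤ 6` with `p ≡ 1 (mod r)` and every `γ ∈ 𝔽_p^×`, the number of pairs `(a,b) ∈ 𝔽_p²` with
`-16(4a³+27b²) = γ·c^r` for some `c ∈ 𝔽_p` equals `p²/r + O(p^{3/2})`. -/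
theorem statement11 (r : ℕ) (hr : 1 ≤ r) :
    ∃ C : ℝ, 0 < C ∧ ∀ p : ℕ, p.Prime → ¬ p ∣ 6 → p ≡ 1 [MOD r] →
      ∀ γ : (ZMod p)ˣ,
        |(Nat.card {ab : ZMod p × ZMod p // ∃ c : ZMod p,
            -16 * (4 * ab.1 ^ 3 + 27 * ab.2 ^ 2) = (γ : ZMod p) * c ^ r} : ℝ) -
          (p : ℝ) ^ 2 / (r : ℝ)| ≤ C * (p : ℝ) ^ ((3 : ℝ) / 2) := by
  classical
  refine ⟨5, by norm_num, fun p hpp hp6 hmod γ => ?_⟩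
  haveI : Fact p.Prime := ⟨hpp⟩
  open Finset Statement11Aux in
  have hp2 : p ≠ 2 := fun h => hp6 (h ▸ (by norm_num : (2:ℕ) ∣ 6))
  have hp3 : p ≠ 3 := fun h => hp6 (h ▸ (by norm_num : (3:ℕ) ∣ 6))
  have hdvd : r ∣ p - 1 := (Nat.modEq_iff_dvd' hpp.one_lt.le).mp hmod.symm
  have h27 : (27 : ZMod p) ≠ 0 := by
    intro h
    have h' : ((27 : ℕ) : ZMod p) = 0 := by exact_mod_cast h
    have hd : p ∣ 27 := (ZMod.natCast_eq_zero_iff 27 p).mp h'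
    have : p ∣ 3 := hpp.dvd_of_dvd_pow (show p ∣ 3 ^ 3 by norm_num; exact hd)
    exact hp3 ((Nat.prime_dvd_prime_iff_eq hpp (by norm_num)).mp this)
  have h4 : (4 : ZMod p) ≠ 0 := by
    intro h
    have h' : ((4 : ℕ) : ZMod p) = 0 := by exact_mod_cast h
    have hd : p ∣ 4 := (ZMod.natCast_eq_zero_iff 4 p).mp h'
    have : p ∣ 2 := hpp.dvd_of_dvd_pow (show p ∣ 2 ^ 2 by norm_num; exact hd)
    exact hp2 ((Nat.prime_dvd_prime_iff_eq hpp (by norm_num)).mp this)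
  have h16 : (-16 : ZMod p) ≠ 0 := by
    intro h
    have h' : ((16 : ℕ) : ZMod p) = 0 := by
      have : (16 : ZMod p) = 0 := by linear_combination -h
      exact_mod_cast this
    have hd : p ∣ 16 := (ZMod.natCast_eq_zero_iff 16 p).mp h'
    have : p ∣ 2 := hpp.dvd_of_dvd_pow (show p ∣ 2 ^ 4 by norm_num; exact hd)
    exact hp2 ((Nat.prime_dvd_prime_iff_eq hpp (by norm_num)).mp this)
  -- a character of order r
  obtain ⟨χ, horder⟩ := MulChar.exists_mulChar_orderOf (ZMod p)
    (by rw [ZMod.card]; exact hdvd)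
    (Complex.isPrimitiveRoot_exp r (by omega))
  -- notation
  set δ : ZMod p × ZMod p → ZMod p :=
    fun ab => -16 * (4 * ab.1 ^ 3 + 27 * ab.2 ^ 2) with hδ
  set N : ℕ := (univ.filter fun ab : ZMod p × ZMod p =>
    ∃ c : ZMod p, δ ab = (γ : ZMod p) * c ^ r).card with hN
  set N0 : ℕ := (univ.filter fun ab : ZMod p × ZMod p => δ ab = 0).card with hN0
  set T : ℕ := ∑ ab : ZMod p × ZMod p,
    (univ.filter fun c : ZMod p => c ^ r = ((γ : ZMod p))⁻¹ * δ ab).card with hT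
  -- Nat.card = N
  have hNcard : Nat.card {ab : ZMod p × ZMod p // ∃ c : ZMod p,
      -16 * (4 * ab.1 ^ 3 + 27 * ab.2 ^ 2) = (γ : ZMod p) * c ^ r} = N := by
    rw [Nat.card_eq_fintype_card, hN]
    convert Fintype.card_subtype _ using 2
  -- the three estimates
  have hrel : r * N = T + (r - 1) * N0 :=
    count_relation hr hdvd (fun hu hc => card_pow_eq hr hdvd hu hc) γ δ
  have hN0le : N0 ≤ 3 * p := by
    rw [hN0]
    have : (univ.filter fun ab : ZMod p × ZMod p => δ ab = 0)
        = (univ.filter fun ab : ZMod p × ZMod p => 4 * ab.1 ^ 3 + 27 * ab.2 ^ 2 = 0) := by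
      apply Finset.filter_congr
      intro ab _
      rw [hδ]
      simp only
      constructor
      · intro h
        rcases mul_eq_zero.mp h with h | h
        · exact absurd h h16
        · exact h
      · intro h; rw [h, mul_zero]
    rw [this]
    exact N0_le h4
  have hTest' := T_estimate hr hdvd hp2 h27 h4 h16 horder γ
  have hTR : (T:ℝ) = ∑ ab : ZMod p × ZMod p,
      ((univ.filter fun c : ZMod p =>
        c ^ r = ((γ : ZMod p))⁻¹ * (-16 * (4 * ab.1 ^ 3 + 27 * ab.2 ^ 2))).card : ℝ) := by
    rw [hT]; push_cast; rfl
  rw [← hTR] at hTest'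
  have hTest : |(T:ℝ) - (p:ℝ)^2| ≤ ((r:ℝ) - 1) * (2 * (p:ℝ) ^ ((3:ℝ)/2)) := hTest'
  -- real arithmetic
  have hrpos : (0:ℝ) < r := by exact_mod_cast hr
  have hr1 : (1:ℝ) ≤ (r:ℝ) := by exact_mod_cast hr
  have hNT : (r:ℝ) * (N:ℝ) = (T:ℝ) + ((r:ℝ) - 1) * (N0:ℝ) := by
    have := congrArg (fun n : ℕ => (n:ℝ)) hrel
    push_cast [Nat.cast_sub hr] at this
    linarith [this]
  have hple : (p:ℝ) ≤ (p:ℝ) ^ ((3:ℝ)/2) := by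
    rw [rpow32 hpp.pos]
    have hsqrt1 : (1:ℝ) ≤ Real.sqrt p := by
      rw [show (1:ℝ) = Real.sqrt 1 by simp]
      exact Real.sqrt_le_sqrt (by exact_mod_cast hpp.one_lt.le)
    nlinarith [Nat.cast_nonneg (α := ℝ) p]
  have hN0R : (N0:ℝ) ≤ 3 * (p:ℝ) := by exact_mod_cast hN0le
  have hnum : |(r:ℝ) * (N:ℝ) - (p:ℝ)^2| ≤ (r:ℝ) * (5 * (p:ℝ) ^ ((3:ℝ)/2)) := by
    rw [hNT]
    have habs : |(T:ℝ) + ((r:ℝ) - 1) * (N0:ℝ) - (p:ℝ)^2|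
        ≤ |(T:ℝ) - (p:ℝ)^2| + ((r:ℝ) - 1) * (N0:ℝ) := by
      have h1 : (T:ℝ) + ((r:ℝ) - 1) * (N0:ℝ) - (p:ℝ)^2
          = ((T:ℝ) - (p:ℝ)^2) + ((r:ℝ) - 1) * (N0:ℝ) := by ring
      rw [h1]
      calc |((T:ℝ) - (p:ℝ)^2) + ((r:ℝ) - 1) * (N0:ℝ)|
          ≤ |(T:ℝ) - (p:ℝ)^2| + |((r:ℝ) - 1) * (N0:ℝ)| := abs_add_le _ _
      _ = |(T:ℝ) - (p:ℝ)^2| + ((r:ℝ) - 1) * (N0:ℝ) := by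
          have hnn : (0:ℝ) ≤ ((r:ℝ) - 1) * (N0:ℝ) :=
            mul_nonneg (by linarith : (0:ℝ) ≤ (r:ℝ) - 1) (Nat.cast_nonneg N0)
          rw [abs_of_nonneg hnn]
    have h2 : ((r:ℝ) - 1) * (N0:ℝ) ≤ ((r:ℝ) - 1) * (3 * (p:ℝ) ^ ((3:ℝ)/2)) := by
      have : (N0:ℝ) ≤ 3 * (p:ℝ) ^ ((3:ℝ)/2) := by linarith
      exact mul_le_mul_of_nonneg_left this (by linarith)
    have h3 : ((r:ℝ) - 1) * (2 * (p:ℝ) ^ ((3:ℝ)/2)) + ((r:ℝ) - 1) * (3 * (p:ℝ) ^ ((3:ℝ)/2))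
        ≤ (r:ℝ) * (5 * (p:ℝ) ^ ((3:ℝ)/2)) := by
      have hp32 : (0:ℝ) ≤ (p:ℝ) ^ ((3:ℝ)/2) := by positivity
      nlinarith
    linarith [habs, hTest, h2, h3]
  rw [hNcard]
  have heq : (N:ℝ) - (p:ℝ)^2 / (r:ℝ) = ((r:ℝ) * (N:ℝ) - (p:ℝ)^2) / (r:ℝ) := by
    field_simp
  rw [heq, abs_div, abs_of_pos hrpos, div_le_iff₀ hrpos]
  calc |(r:ℝ) * (N:ℝ) - (p:ℝ)^2| ≤ (r:ℝ) * (5 * (p:ℝ) ^ ((3:ℝ)/2)) := hnum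
  _ = 5 * (p:ℝ) ^ ((3:ℝ)/2) * (r:ℝ) := by ring
end

section
/- Let ℓ be a prime and n ≥ 2 an integer, and let H be a subgroup of SL₂(ℤ/ℓⁿℤ). If the image of H under the entrywise reduction homomorphism SL₂(ℤ/ℓⁿℤ) → SL₂(ℤ/ℓ²ℤ) is all of SL₂(ℤ/ℓ²ℤ), then H = SL₂(ℤ/ℓⁿℤ). -/
open Matrix

lemma hcast {a b : ℕ} [NeZero b] (hdvd : a ∣ b) (x : ZMod b)
    (hx : ZMod.castHom hdvd (ZMod a) x = 0) : ∃ y, x = (a : ZMod b) * y := by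
  have hx' : ((x.val : ℕ) : ZMod a) = 0 := by
    rw [← map_natCast (ZMod.castHom hdvd (ZMod a)) x.val, ZMod.natCast_val, ZMod.cast_id] at *
    exact hx
  rw [ZMod.natCast_eq_zero_iff] at hx'
  obtain ⟨c, hc⟩ := hx'
  refine ⟨(c : ZMod b), ?_⟩
  have : ((x.val : ℕ) : ZMod b) = x := by rw [ZMod.natCast_val, ZMod.cast_id]
  rw [← this, hc, Nat.cast_mul]

/-- helper 2: two matrices with equal reductions differ by a multiple -/
lemma hmat {a b : ℕ} [NeZero b] (hdvd : a ∣ b) (X Y : Matrix (Fin 2) (Fin 2) (ZMod b))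
    (h : X.map (ZMod.castHom hdvd (ZMod a)) = Y.map (ZMod.castHom hdvd (ZMod a))) :
    ∃ B, X = Y + (a : ZMod b) • B := by
  have he : ∀ i j, ∃ y, X i j = Y i j + (a : ZMod b) * y := by
    intro i j
    have : ZMod.castHom hdvd (ZMod a) (X i j - Y i j) = 0 := by
      rw [map_sub]
      have := congrFun (congrFun h i) j
      simp only [Matrix.map_apply] at this
      rw [this, sub_self]
    obtain ⟨y, hy⟩ := hcast hdvd _ this
    exact ⟨y, by linear_combination hy⟩
  choose B hB using he
  refine ⟨Matrix.of B, ?_⟩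
  ext i j
  simp [hB i j]

/-- helper: cast of ℓ^e is zero when k+1 ≤ e -/
lemma hpowzero {ℓ j e : ℕ} (h : j ≤ e) : ((ℓ : ZMod (ℓ ^ j)) ^ e) = 0 := by
  rw [← Nat.cast_pow, ZMod.natCast_eq_zero_iff]
  exact pow_dvd_pow ℓ h

/-- divisibility fact for binomial coefficients -/
lemma hdvd_choose {ℓ k m : ℕ} (hℓ : ℓ.Prime) (hk : 2 ≤ k) (hcase : ℓ ≠ 2 ∨ 3 ≤ k)
    (hm : 2 ≤ m) : ℓ ^ (k+1) ∣ ℓ ^ (m * (k-1)) * ℓ.choose m := by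
  rcases Nat.lt_or_ge m 3 with hm3 | hm3
  · have hm2 : m = 2 := by omega
    subst hm2
    rcases hcase with hodd | hk3
    · obtain ⟨c, hc⟩ := hℓ.odd_of_ne_two hodd
      have : ℓ.choose 2 = ℓ * c := by
        rw [Nat.choose_two_right, show ℓ - 1 = c * 2 by omega, ← mul_assoc,
          Nat.mul_div_cancel _ (by norm_num)]
      rw [this, ← mul_assoc, ← pow_succ]
      exact Dvd.dvd.mul_right (pow_dvd_pow ℓ (by omega)) c
    · exact Dvd.dvd.mul_right (pow_dvd_pow ℓ (by omega)) _
  · refine Dvd.dvd.mul_right (pow_dvd_pow ℓ ?_) _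
    calc k + 1 ≤ 3 * (k-1) := by omega
    _ ≤ m * (k-1) := Nat.mul_le_mul_right _ hm3

/-- helper 3: the binomial power identity -/
lemma hpow {ℓ k : ℕ} (hℓ : ℓ.Prime) (hk : 2 ≤ k) (hcase : ℓ ≠ 2 ∨ 3 ≤ k)
    (C : Matrix (Fin 2) (Fin 2) (ZMod (ℓ ^ (k+1)))) :
    (1 + ((ℓ : ZMod (ℓ ^ (k+1))) ^ (k-1)) • C) ^ ℓ
      = 1 + ((ℓ : ZMod (ℓ ^ (k+1))) ^ k) • C := by
  have hcomm : Commute (((ℓ : ZMod (ℓ ^ (k+1))) ^ (k-1)) • C)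
      (1 : Matrix (Fin 2) (Fin 2) (ZMod (ℓ ^ (k+1)))) := Commute.one_right _
  rw [add_comm (1 : Matrix (Fin 2) (Fin 2) (ZMod (ℓ ^ (k+1)))) _, hcomm.add_pow]
  have hl2 := hℓ.two_le
  have hsplit : Finset.range (ℓ + 1) = insert 0 (insert 1 (Finset.Ico 2 (ℓ+1))) := by
    ext m
    simp only [Finset.mem_range, Finset.mem_insert, Finset.mem_Ico]
    omega
  rw [hsplit, Finset.sum_insert (by simp), Finset.sum_insert (by simp)]
  have hzero : ∀ m ∈ Finset.Ico 2 (ℓ+1),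
      (((ℓ : ZMod (ℓ ^ (k+1))) ^ (k-1)) • C) ^ m * (1:Matrix (Fin 2) (Fin 2) (ZMod (ℓ ^ (k+1)))) ^ (ℓ - m)
        * (ℓ.choose m : Matrix (Fin 2) (Fin 2) (ZMod (ℓ ^ (k+1)))) = 0 := by
    intro m hm
    rw [Finset.mem_Ico] at hm
    rw [one_pow, mul_one, smul_pow, ← pow_mul,
      show ((ℓ.choose m : ℕ) : Matrix (Fin 2) (Fin 2) (ZMod (ℓ ^ (k+1))))
        = (ℓ.choose m) • (1 : Matrix (Fin 2) (Fin 2) (ZMod (ℓ ^ (k+1)))) from by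
          rw [nsmul_eq_mul, mul_one],
      smul_mul_assoc, mul_smul_comm, mul_one, ← Nat.cast_smul_eq_nsmul (ZMod (ℓ ^ (k+1))),
      smul_smul, ← Nat.cast_pow, ← Nat.cast_mul]
    have : ((ℓ ^ ((k-1) * m) * ℓ.choose m : ℕ) : ZMod (ℓ ^ (k+1))) = 0 := by
      rw [ZMod.natCast_eq_zero_iff, mul_comm (k-1) m]
      exact hdvd_choose hℓ hk hcase hm.1
    rw [this, zero_smul]
  rw [Finset.sum_eq_zero hzero, add_zero]
  simp only [pow_zero, pow_one, one_pow, one_mul, mul_one, Nat.choose_zero_right,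
    Nat.choose_one_right, Nat.cast_one]
  rw [show ((ℓ : ℕ) : Matrix (Fin 2) (Fin 2) (ZMod (ℓ ^ (k+1))))
        = ℓ • (1 : Matrix (Fin 2) (Fin 2) (ZMod (ℓ ^ (k+1)))) from by
          rw [nsmul_eq_mul, mul_one],
    mul_smul_comm, mul_one, ← Nat.cast_smul_eq_nsmul (ZMod (ℓ ^ (k+1))), smul_smul,
    ← pow_succ', show k - 1 + 1 = k from by omega]

/-- helper: from ℓ^k * s = 0 in ZMod (ℓ^(k+1)), get s = ℓ * t -/
lemma htrace {ℓ k : ℕ} (hℓ : 1 ≤ ℓ) (s : ZMod (ℓ ^ (k+1))) [NeZero (ℓ ^ (k+1))]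
    (hs : ((ℓ : ZMod (ℓ ^ (k+1))) ^ k) * s = 0) : ∃ t, s = (ℓ : ZMod (ℓ ^ (k+1))) * t := by
  have h1 : s = ((s.val : ℕ) : ZMod (ℓ ^ (k+1))) := by rw [ZMod.natCast_val, ZMod.cast_id]
  rw [h1, ← Nat.cast_pow, ← Nat.cast_mul, ZMod.natCast_eq_zero_iff] at hs
  have hdvd : ℓ ∣ s.val := by
    rcases hs with ⟨c, hc⟩
    refine ⟨c, Nat.eq_of_mul_eq_mul_left (pow_pos (show 0 < ℓ by omega) k) ?_⟩
    calc ℓ ^ k * s.val = ℓ ^ (k+1) * c := hc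
    _ = ℓ ^ k * (ℓ * c) := by ring
  obtain ⟨c, hc⟩ := hdvd
  exact ⟨(c : ZMod (ℓ ^ (k+1))), by rw [h1, hc, Nat.cast_mul]⟩

open Matrix SpecialLinearGroup in
/-- general lifting step -/
lemma hstep {ℓ k : ℕ} (hℓ : ℓ.Prime) (hk : 2 ≤ k) (hcase : ℓ ≠ 2 ∨ 3 ≤ k)
    (H : Subgroup (SpecialLinearGroup (Fin 2) (ZMod (ℓ ^ (k+1)))))
    (hH : H.map (SpecialLinearGroup.map
      (ZMod.castHom (pow_dvd_pow ℓ (Nat.le_succ k)) (ZMod (ℓ ^ k)))) = ⊤) :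
    H = ⊤ := by
  haveI : NeZero (ℓ ^ (k+1)) := ⟨pow_ne_zero _ hℓ.pos.ne'⟩
  haveI : NeZero (ℓ ^ k) := ⟨pow_ne_zero _ hℓ.pos.ne'⟩
  set π := SpecialLinearGroup.map (n := Fin 2)
    (ZMod.castHom (pow_dvd_pow ℓ (Nat.le_succ k)) (ZMod (ℓ ^ k))) with hπ
  have hsurj : ∀ x : SpecialLinearGroup (Fin 2) (ZMod (ℓ ^ k)), ∃ h ∈ H, π h = x := by
    intro x
    have : x ∈ H.map π := by rw [hH]; trivial
    simpa [Subgroup.mem_map] using this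
  -- kernel is contained in H
  have hker : ∀ u : SpecialLinearGroup (Fin 2) (ZMod (ℓ ^ (k+1))), π u = 1 → u ∈ H := by
    intro u hu
    -- u = 1 + ℓ^k • A
    have hu' : (u : Matrix (Fin 2) (Fin 2) (ZMod (ℓ ^ (k+1)))).map
        (ZMod.castHom (pow_dvd_pow ℓ (Nat.le_succ k)) (ZMod (ℓ ^ k)))
        = (1 : Matrix (Fin 2) (Fin 2) (ZMod (ℓ ^ (k+1)))).map
          (ZMod.castHom (pow_dvd_pow ℓ (Nat.le_succ k)) (ZMod (ℓ ^ k))) := by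
      have := congrArg (Subtype.val) hu
      simp only [π, SpecialLinearGroup.map_apply_coe, RingHom.mapMatrix_apply,
        SpecialLinearGroup.coe_one] at this
      rw [this, Matrix.map_one _ (map_zero _) (map_one _)]
      rfl
    obtain ⟨A, hA⟩ := hmat (pow_dvd_pow ℓ (Nat.le_succ k)) _ _ hu'
    have hc2 : ((ℓ : ZMod (ℓ ^ (k+1))) ^ k) * ((ℓ : ZMod (ℓ ^ (k+1))) ^ k) = 0 := by
      rw [← pow_add]
      exact hpowzero (by omega)
    have hdet := u.2
    rw [hA, Matrix.det_fin_two] at hdet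
    simp only [Matrix.add_apply, Matrix.smul_apply, Matrix.one_apply, smul_eq_mul] at hdet
    push_cast at hdet
    have htr : ((ℓ : ZMod (ℓ ^ (k+1))) ^ k) * (A 0 0 + A 1 1) = 0 := by
      linear_combination hdet + (A 0 1 * A 1 0 - A 0 0 * A 1 1) * hc2
    obtain ⟨t, ht⟩ := htrace hℓ.one_lt.le _ htr
    -- the approximating matrix over ZMod (ℓ^k)
    set f := ZMod.castHom (pow_dvd_pow ℓ (Nat.le_succ k)) (ZMod (ℓ ^ k)) with hf
    set M : Matrix (Fin 2) (Fin 2) (ZMod (ℓ ^ k)) :=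
      1 + ((ℓ : ZMod (ℓ ^ k)) ^ (k-1)) • (A.map f) with hM
    have hq2 : ((ℓ : ZMod (ℓ ^ k)) ^ (k-1)) * ((ℓ : ZMod (ℓ ^ k)) ^ (k-1)) = 0 := by
      rw [← pow_add]
      exact hpowzero (by omega)
    have hqtr : ((ℓ : ZMod (ℓ ^ k)) ^ (k-1)) * (f (A 0 0) + f (A 1 1)) = 0 := by
      rw [← map_add, ht, _root_.map_mul, map_natCast, ← mul_assoc, ← pow_succ,
        show k - 1 + 1 = k from by omega, hpowzero (le_refl k), zero_mul]
    have hdetM : M.det = 1 := by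
      rw [hM, Matrix.det_fin_two]
      simp only [Matrix.add_apply, Matrix.smul_apply, Matrix.one_apply, Matrix.map_apply,
        smul_eq_mul]
      norm_num
      linear_combination (1 + ((ℓ : ZMod (ℓ ^ k)) ^ (k-1)) * f (A 1 1)) * hqtr +
        (f (A 0 0) * f (A 1 1) - f (A 0 1) * f (A 1 0)
          - f (A 1 1) * (f (A 0 0) + f (A 1 1))) * hq2
    obtain ⟨h, hhH, hπh⟩ := hsurj ⟨M, hdetM⟩
    -- h ≡ 1 + ℓ^(k-1) A  mod ℓ^k
    have hred : (h : Matrix (Fin 2) (Fin 2) (ZMod (ℓ ^ (k+1)))).map f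
        = (1 + ((ℓ : ZMod (ℓ ^ (k+1))) ^ (k-1)) • A).map f := by
      have h1 := congrArg (Subtype.val) hπh
      simp only [hπ, SpecialLinearGroup.map_apply_coe, RingHom.mapMatrix_apply] at h1
      rw [h1, hM]
      ext i j
      simp only [Matrix.map_apply, Matrix.add_apply, Matrix.smul_apply, Matrix.one_apply,
        smul_eq_mul, _root_.map_add, _root_.map_mul, map_pow, map_natCast, apply_ite f,
        _root_.map_one, _root_.map_zero]
    obtain ⟨B, hB⟩ := hmat (pow_dvd_pow ℓ (Nat.le_succ k)) _ _ hred
    have hsm : ((ℓ^k : ℕ) : ZMod (ℓ ^ (k+1))) • B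
        = ((ℓ : ZMod (ℓ ^ (k+1))) ^ (k-1)) • (((ℓ : ZMod (ℓ ^ (k+1)))) • B) := by
      rw [smul_smul, ← pow_succ, show k - 1 + 1 = k from by omega, Nat.cast_pow]
    have hC : (h : Matrix (Fin 2) (Fin 2) (ZMod (ℓ ^ (k+1))))
        = 1 + ((ℓ : ZMod (ℓ ^ (k+1))) ^ (k-1)) • (A + ((ℓ : ZMod (ℓ ^ (k+1)))) • B) := by
      rw [hB, hsm, smul_add, add_assoc]
    -- conclude u = h ^ ℓ
    have hupow : u = h ^ ℓ := by
      suffices hm : (u : Matrix (Fin 2) (Fin 2) (ZMod (ℓ ^ (k+1))))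
        = (h : Matrix (Fin 2) (Fin 2) (ZMod (ℓ ^ (k+1)))) ^ ℓ from
        Subtype.ext (by exact hm)
      rw [hC, hpow hℓ hk hcase, hA, smul_add, smul_smul,
        ← pow_succ, hpowzero (le_refl (k+1)), zero_smul, add_zero, Nat.cast_pow]
    rw [hupow]
    exact pow_mem hhH ℓ
  -- conclusion from surjectivity and kernel
  rw [Subgroup.eq_top_iff']
  intro g
  obtain ⟨h, hhH, hπh⟩ := hsurj (π g)
  have : π (h⁻¹ * g) = 1 := by
    rw [MonoidHom.map_mul, MonoidHom.map_inv, hπh, inv_mul_cancel]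
  have hmem := hker _ this
  simpa using Subgroup.mul_mem H hhH hmem

/-- squares mod 8 only depend on reduction mod 4 (for odd-type matrices) -/
lemma hsq (h M A' : Matrix (Fin 2) (Fin 2) (ZMod (2^3)))
    (hM : M = 1 + (2 : ZMod (2^3)) • A')
    (hh : h.map (ZMod.castHom (pow_dvd_pow 2 (Nat.le_succ 2)) (ZMod (2^2)))
      = M.map (ZMod.castHom (pow_dvd_pow 2 (Nat.le_succ 2)) (ZMod (2^2)))) :
    h * h = M * M := by
  haveI : NeZero (2^3 : ℕ) := ⟨by norm_num⟩
  obtain ⟨B, hB⟩ := hmat (pow_dvd_pow 2 (Nat.le_succ 2)) _ _ hh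
  rw [hB, hM]
  simp only [add_mul, mul_add, smul_mul_assoc, mul_smul_comm, smul_smul, smul_add,
    one_mul, mul_one]
  match_scalars <;> decide

open Matrix SpecialLinearGroup in
/-- core of the 2-adic step: if u is a product of three squares of reductions -/
lemma hcore (H : Subgroup (SpecialLinearGroup (Fin 2) (ZMod (2 ^ 3))))
    (hsurj : ∀ x : SpecialLinearGroup (Fin 2) (ZMod (2 ^ 2)), ∃ h ∈ H,
      SpecialLinearGroup.map (n := Fin 2)
        (ZMod.castHom (pow_dvd_pow 2 (Nat.le_succ 2)) (ZMod (2 ^ 2))) h = x)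
    (u : SpecialLinearGroup (Fin 2) (ZMod (2 ^ 3)))
    (M₁ M₂ M₃ A₁ A₂ A₃ : Matrix (Fin 2) (Fin 2) (ZMod (2^3)))
    (hM₁ : M₁ = 1 + (2 : ZMod (2^3)) • A₁)
    (hM₂ : M₂ = 1 + (2 : ZMod (2^3)) • A₂)
    (hM₃ : M₃ = 1 + (2 : ZMod (2^3)) • A₃)
    (hd₁ : (M₁.map (ZMod.castHom (pow_dvd_pow 2 (Nat.le_succ 2)) (ZMod (2^2)))).det = 1)
    (hd₂ : (M₂.map (ZMod.castHom (pow_dvd_pow 2 (Nat.le_succ 2)) (ZMod (2^2)))).det = 1)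
    (hd₃ : (M₃.map (ZMod.castHom (pow_dvd_pow 2 (Nat.le_succ 2)) (ZMod (2^2)))).det = 1)
    (hu : (u : Matrix (Fin 2) (Fin 2) (ZMod (2^3))) = M₁ * M₁ * (M₂ * M₂ * (M₃ * M₃))) :
    u ∈ H := by
  obtain ⟨h₁, hh₁, hπ₁⟩ := hsurj ⟨_, hd₁⟩
  obtain ⟨h₂, hh₂, hπ₂⟩ := hsurj ⟨_, hd₂⟩
  obtain ⟨h₃, hh₃, hπ₃⟩ := hsurj ⟨_, hd₃⟩
  have c1 := congrArg Subtype.val hπ₁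
  simp only [SpecialLinearGroup.map_apply_coe, RingHom.mapMatrix_apply] at c1
  have e₁ := hsq _ _ _ hM₁ c1
  have c2 := congrArg Subtype.val hπ₂
  simp only [SpecialLinearGroup.map_apply_coe, RingHom.mapMatrix_apply] at c2
  have e₂ := hsq _ _ _ hM₂ c2
  have c3 := congrArg Subtype.val hπ₃
  simp only [SpecialLinearGroup.map_apply_coe, RingHom.mapMatrix_apply] at c3
  have e₃ := hsq _ _ _ hM₃ c3
  have : u = h₁ * h₁ * (h₂ * h₂ * (h₃ * h₃)) := by
    suffices hm : (u : Matrix (Fin 2) (Fin 2) (ZMod (2^3)))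
      = (h₁ : Matrix (Fin 2) (Fin 2) (ZMod (2^3))) * h₁ * (h₂ * h₂ * (h₃ * h₃)) from
      Subtype.ext (by exact hm)
    rw [hu, e₁, e₂, e₃]
  rw [this]
  exact Subgroup.mul_mem H (Subgroup.mul_mem H hh₁ hh₁)
    (Subgroup.mul_mem H (Subgroup.mul_mem H hh₂ hh₂) (Subgroup.mul_mem H hh₃ hh₃))

lemma h48one : ∀ x : ZMod (2^3),
    ZMod.castHom (pow_dvd_pow 2 (Nat.le_succ 2)) (ZMod (2^2)) x = 1 → x = 1 ∨ x = 5 := by decide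

lemma h48zero : ∀ x : ZMod (2^3),
    ZMod.castHom (pow_dvd_pow 2 (Nat.le_succ 2)) (ZMod (2^2)) x = 0 → x = 0 ∨ x = 4 := by decide

open Matrix SpecialLinearGroup in
/-- the 2-adic lifting step from level 4 to level 8 -/
lemma hstep2 (H : Subgroup (SpecialLinearGroup (Fin 2) (ZMod (2 ^ 3))))
    (hH : H.map (SpecialLinearGroup.map
      (ZMod.castHom (pow_dvd_pow 2 (Nat.le_succ 2)) (ZMod (2 ^ 2)))) = ⊤) :
    H = ⊤ := by
  set π := SpecialLinearGroup.map (n := Fin 2)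
    (ZMod.castHom (pow_dvd_pow 2 (Nat.le_succ 2)) (ZMod (2 ^ 2))) with hπ
  have hsurj : ∀ x : SpecialLinearGroup (Fin 2) (ZMod (2 ^ 2)), ∃ h ∈ H, π h = x := by
    intro x
    have : x ∈ H.map π := by rw [hH]; trivial
    simpa [Subgroup.mem_map] using this
  have hker : ∀ u : SpecialLinearGroup (Fin 2) (ZMod (2 ^ 3)), π u = 1 → u ∈ H := by
    intro u hu
    have h1 : (u : Matrix (Fin 2) (Fin 2) (ZMod (2 ^ 3))).map
        (ZMod.castHom (pow_dvd_pow 2 (Nat.le_succ 2)) (ZMod (2 ^ 2))) = 1 := by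
      have := congrArg (Subtype.val) hu
      simpa [π, SpecialLinearGroup.map_apply_coe, RingHom.mapMatrix_apply] using this
    have e00 : ZMod.castHom (pow_dvd_pow 2 (Nat.le_succ 2)) (ZMod (2 ^ 2))
        ((u : Matrix (Fin 2) (Fin 2) (ZMod (2 ^ 3))) 0 0) = 1 := by
      have := congrFun (congrFun h1 0) 0
      simpa [Matrix.map_apply, Matrix.one_apply] using this
    have e01 : ZMod.castHom (pow_dvd_pow 2 (Nat.le_succ 2)) (ZMod (2 ^ 2))
        ((u : Matrix (Fin 2) (Fin 2) (ZMod (2 ^ 3))) 0 1) = 0 := by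
      have := congrFun (congrFun h1 0) 1
      simpa [Matrix.map_apply, Matrix.one_apply] using this
    have e10 : ZMod.castHom (pow_dvd_pow 2 (Nat.le_succ 2)) (ZMod (2 ^ 2))
        ((u : Matrix (Fin 2) (Fin 2) (ZMod (2 ^ 3))) 1 0) = 0 := by
      have := congrFun (congrFun h1 1) 0
      simpa [Matrix.map_apply, Matrix.one_apply] using this
    have e11 : ZMod.castHom (pow_dvd_pow 2 (Nat.le_succ 2)) (ZMod (2 ^ 2))
        ((u : Matrix (Fin 2) (Fin 2) (ZMod (2 ^ 3))) 1 1) = 1 := by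
      have := congrFun (congrFun h1 1) 1
      simpa [Matrix.map_apply, Matrix.one_apply] using this
    have hdet := u.2
    rw [Matrix.det_fin_two] at hdet
    rcases h48one _ e00 with h00 | h00 <;> rcases h48zero _ e01 with h01 | h01 <;>
      rcases h48zero _ e10 with h10 | h10 <;> rcases h48one _ e11 with h11 | h11 <;>
      [skip; skip; skip; skip; skip; skip; skip; skip;
       skip; skip; skip; skip; skip; skip; skip; skip]
    all_goals try (rw [h00, h01, h10, h11] at hdet; exact absurd hdet (by decide))
    -- case (1,0,0,1) : u = 1
    · exact hcore H hsurj u 1 1 1 0 0 0 (by decide) (by decide) (by decide)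
        (by decide) (by decide) (by decide)
        (by rw [Matrix.eta_fin_two (u : Matrix (Fin 2) (Fin 2) (ZMod (2 ^ 3))), h00, h01, h10, h11]; decide)
    -- case (1,0,4,1) : γ = 1
    · exact hcore H hsurj u 1 !![1,0;2,1] 1 0 !![0,0;1,0] 0 (by decide) (by decide) (by decide)
        (by decide) (by decide) (by decide)
        (by rw [Matrix.eta_fin_two (u : Matrix (Fin 2) (Fin 2) (ZMod (2 ^ 3))), h00, h01, h10, h11]; decide)
    -- case (1,4,0,1) : β = 1
    · exact hcore H hsurj u !![1,2;0,1] 1 1 !![0,1;0,0] 0 0 (by decide) (by decide) (by decide)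
        (by decide) (by decide) (by decide)
        (by rw [Matrix.eta_fin_two (u : Matrix (Fin 2) (Fin 2) (ZMod (2 ^ 3))), h00, h01, h10, h11]; decide)
    -- case (1,4,4,1)
    · exact hcore H hsurj u !![1,2;0,1] !![1,0;2,1] 1 !![0,1;0,0] !![0,0;1,0] 0
        (by decide) (by decide) (by decide) (by decide) (by decide) (by decide)
        (by rw [Matrix.eta_fin_two (u : Matrix (Fin 2) (Fin 2) (ZMod (2 ^ 3))), h00, h01, h10, h11]; decide)
    -- case (5,0,0,5)
    · exact hcore H hsurj u !![1,2;0,1] !![1,0;2,1] !![1,2;2,1] !![0,1;0,0] !![0,0;1,0] !![0,1;1,0]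
        (by decide) (by decide) (by decide) (by decide) (by decide) (by decide)
        (by rw [Matrix.eta_fin_two (u : Matrix (Fin 2) (Fin 2) (ZMod (2 ^ 3))), h00, h01, h10, h11]; decide)
    -- case (5,0,4,5)
    · exact hcore H hsurj u !![1,2;0,1] 1 !![1,2;2,1] !![0,1;0,0] 0 !![0,1;1,0]
        (by decide) (by decide) (by decide) (by decide) (by decide) (by decide)
        (by rw [Matrix.eta_fin_two (u : Matrix (Fin 2) (Fin 2) (ZMod (2 ^ 3))), h00, h01, h10, h11]; decide)
    -- case (5,4,0,5)
    · exact hcore H hsurj u 1 !![1,0;2,1] !![1,2;2,1] 0 !![0,0;1,0] !![0,1;1,0]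
        (by decide) (by decide) (by decide) (by decide) (by decide) (by decide)
        (by rw [Matrix.eta_fin_two (u : Matrix (Fin 2) (Fin 2) (ZMod (2 ^ 3))), h00, h01, h10, h11]; decide)
    -- case (5,4,4,5)
    · exact hcore H hsurj u 1 1 !![1,2;2,1] 0 0 !![0,1;1,0]
        (by decide) (by decide) (by decide) (by decide) (by decide) (by decide)
        (by rw [Matrix.eta_fin_two (u : Matrix (Fin 2) (Fin 2) (ZMod (2 ^ 3))), h00, h01, h10, h11]; decide)
  rw [Subgroup.eq_top_iff']
  intro g
  obtain ⟨h, hhH, hπh⟩ := hsurj (π g)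
  have : π (h⁻¹ * g) = 1 := by
    rw [MonoidHom.map_mul, MonoidHom.map_inv, hπh, inv_mul_cancel]
  have hmem := hker _ this
  simpa using Subgroup.mul_mem H hhH hmem

open Matrix SpecialLinearGroup in
/-- composition of the reduction maps on SL₂ -/
lemma hmapcomp {a b c : ℕ} (hab : a ∣ b) (hbc : b ∣ c) :
    (SpecialLinearGroup.map (n := Fin 2) (ZMod.castHom hab (ZMod a))).comp
      (SpecialLinearGroup.map (n := Fin 2) (ZMod.castHom hbc (ZMod b)))
      = SpecialLinearGroup.map (n := Fin 2) (ZMod.castHom (hab.trans hbc) (ZMod a)) := by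
  ext x i j
  simp only [MonoidHom.comp_apply, SpecialLinearGroup.map_apply_coe, RingHom.mapMatrix_apply,
    Matrix.map_apply]
  exact RingHom.congr_fun (ZMod.castHom_comp hab hbc) _

open Matrix SpecialLinearGroup in
lemma hmain (ℓ : ℕ) (hℓ : ℓ.Prime) : ∀ n, 2 ≤ n →
    ∀ H : Subgroup (SpecialLinearGroup (Fin 2) (ZMod (ℓ ^ n))),
    ∀ hn : 2 ≤ n,
    H.map (SpecialLinearGroup.map
      (ZMod.castHom (pow_dvd_pow ℓ hn) (ZMod (ℓ ^ 2)))) = ⊤ → H = ⊤ := by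
  intro n hn
  induction n, hn using Nat.le_induction with
  | base =>
    intro H hn hH
    have hid : (SpecialLinearGroup.map (n := Fin 2)
        (ZMod.castHom (pow_dvd_pow ℓ hn) (ZMod (ℓ ^ 2)))) = MonoidHom.id _ := by
      ext x i j
      simp only [SpecialLinearGroup.map_apply_coe, RingHom.mapMatrix_apply,
        Matrix.map_apply, MonoidHom.id_apply]
      exact RingHom.congr_fun ZMod.castHom_self _
    rw [hid, Subgroup.map_id] at hH
    exact hH
  | succ n hn2 IH =>
    intro H hn hH
    -- reduce to level n
    have hs : (H.map (SpecialLinearGroup.map (n := Fin 2)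
        (ZMod.castHom (pow_dvd_pow ℓ (Nat.le_succ n)) (ZMod (ℓ ^ n))))).map
        (SpecialLinearGroup.map (n := Fin 2)
          (ZMod.castHom (pow_dvd_pow ℓ hn2) (ZMod (ℓ ^ 2)))) = ⊤ := by
      rw [Subgroup.map_map, hmapcomp (pow_dvd_pow ℓ hn2) (pow_dvd_pow ℓ (Nat.le_succ n))]
      exact hH
    have hlevn : H.map (SpecialLinearGroup.map (n := Fin 2)
        (ZMod.castHom (pow_dvd_pow ℓ (Nat.le_succ n)) (ZMod (ℓ ^ n)))) = ⊤ :=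
      IH _ hn2 hs
    by_cases hc : ℓ = 2 ∧ n = 2
    · obtain ⟨h2, hn2'⟩ := hc
      subst h2 hn2'
      exact hstep2 H hlevn
    · refine hstep hℓ hn2 ?_ H hlevn
      rcases Nat.eq_or_lt_of_le hn2 with h | h
      · exact Or.inl (fun h2 => hc ⟨h2, h.symm⟩)
      · exact Or.inr h

/-- For a prime `ℓ` and `n ≥ 2`, a subgroup of `SL₂(ℤ/ℓⁿℤ)` surjecting onto
`SL₂(ℤ/ℓ²ℤ)` is the whole group. -/
theorem statement14 (ℓ : ℕ) (hℓ : ℓ.Prime) (n : ℕ) (hn : 2 ≤ n)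
    (H : Subgroup (Matrix.SpecialLinearGroup (Fin 2) (ZMod (ℓ ^ n))))
    (hH : H.map (Matrix.SpecialLinearGroup.map
      (ZMod.castHom (pow_dvd_pow ℓ hn) (ZMod (ℓ ^ 2)))) = ⊤) :
    H = ⊤ :=
  hmain ℓ hℓ n hn H hn hH
end

section
/- Let G₁, …, G_n be finite groups such that for all i ≠ j: (1) no nonabelian finite simple group is isomorphic both to a subquotient of G_i and to a subquotient of G_j (equivalently, the composition factors of G_i and G_j share no nonabelian simple group), and (2) gcd(|G_i^ab|, |G_j^ab|) = 1, where G^ab denotes the abelianization. If H is a subgroup of G₁ × ⋯ × G_n such that each projection pr_i : G₁ × ⋯ × G_n → G_i maps H onto G_i, then H = G₁ × ⋯ × G_n. -/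
/-- `S` is a subquotient of `G`: it is the image of a surjective group homomorphism from a
subgroup `M` of `G` (equivalently, isomorphic to `M ⧸ N` for some `N ⊴ M ≤ G`). -/
def IsSubquotient (S G : Type) [Group S] [Group G] : Prop :=
  ∃ (M : Subgroup G) (f : M →* S), Function.Surjective f

open Function

section helpers

variable {S G G' : Type} [Group S] [Group G] [Group G']

lemma isSubquotient_of_inj_surj {A : Type} [Group A] (ι : A →* G) (hι : Injective ι)
    (σ : A →* S) (hσ : Surjective σ) : IsSubquotient S G := by
  refine ⟨ι.range, σ.comp ((MulEquiv.symm (MonoidHom.ofInjective hι)).toMonoidHom), ?_⟩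
  exact hσ.comp (MulEquiv.symm (MonoidHom.ofInjective hι)).surjective

lemma isSubquotient_of_surjective (f : G →* S) (hf : Surjective f) : IsSubquotient S G :=
  isSubquotient_of_inj_surj (MonoidHom.id G) injective_id f hf

lemma IsSubquotient.of_mulEquiv (e : G ≃* G') (h : IsSubquotient S G) : IsSubquotient S G' := by
  obtain ⟨M, f, hf⟩ := h
  exact isSubquotient_of_inj_surj (e.toMonoidHom.comp M.subtype)
    (e.injective.comp M.subtype_injective) f hf

/-- A simple subquotient of a product is a subquotient of one of the factors. -/
lemma isSubquotient_prod {G₁ G₂ : Type} [Group G₁] [Group G₂] (S : Type) [Group S]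
    (hS : IsSimpleGroup S) (h : IsSubquotient S (G₁ × G₂)) :
    IsSubquotient S G₁ ∨ IsSubquotient S G₂ := by
  obtain ⟨M, f, hf⟩ := h
  set p : ↥M →* G₁ := (MonoidHom.fst G₁ G₂).comp M.subtype with hp
  have hker : (p.ker.map f).Normal := Subgroup.Normal.map (MonoidHom.normal_ker p) f hf
  rcases hker.eq_bot_or_eq_top with hb | ht
  · left
    have hle : p.ker ≤ f.ker := by
      intro x hx
      have hx' : f x ∈ p.ker.map f := ⟨x, hx, rfl⟩
      rw [hb] at hx'
      simpa [MonoidHom.mem_ker] using hx'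
    refine isSubquotient_of_inj_surj (QuotientGroup.kerLift p)
      (QuotientGroup.kerLift_injective p)
      (QuotientGroup.lift p.ker f hle) ?_
    intro s
    obtain ⟨x, rfl⟩ := hf s
    exact ⟨QuotientGroup.mk x, rfl⟩
  · right
    refine isSubquotient_of_inj_surj
      ((MonoidHom.snd G₁ G₂).comp (M.subtype.comp p.ker.subtype)) ?_
      (f.comp p.ker.subtype) ?_
    · intro x y hxy
      have hx1 : ((x : ↥M) : G₁ × G₂).1 = 1 := x.2
      have hy1 : ((y : ↥M) : G₁ × G₂).1 = 1 := y.2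
      have : ((x : ↥M) : G₁ × G₂) = ((y : ↥M) : G₁ × G₂) := Prod.ext (hx1.trans hy1.symm) hxy
      exact Subtype.ext (Subtype.ext this)
    · intro s
      have : s ∈ p.ker.map f := ht ▸ Subgroup.mem_top s
      obtain ⟨x, hx, rfl⟩ := this
      exact ⟨⟨x, hx⟩, rfl⟩

lemma abelianization_card_dvd_of_surjective (f : G →* G') (hf : Surjective f) :
    Nat.card (Abelianization G') ∣ Nat.card (Abelianization G) := by
  refine Subgroup.card_dvd_of_surjective
    (Abelianization.lift ((Abelianization.of).comp f)) ?_
  intro s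
  obtain ⟨g', rfl⟩ : ∃ g', Abelianization.of g' = s := Quot.exists_rep s
  obtain ⟨g, rfl⟩ := hf g'
  exact ⟨Abelianization.of g, Abelianization.lift_apply_of _ _⟩

lemma card_abelianization_prod_dvd (G₁ G₂ : Type) [Group G₁] [Group G₂] :
    Nat.card (Abelianization (G₁ × G₂)) ∣
      Nat.card (Abelianization G₁) * Nat.card (Abelianization G₂) := by
  rw [← Nat.card_prod]
  set F : (G₁ × G₂) →* Abelianization G₁ × Abelianization G₂ :=
    (Abelianization.of).prodMap (Abelianization.of) with hF
  refine Subgroup.card_dvd_of_injective (Abelianization.lift F) ?_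
  rw [injective_iff_map_eq_one]
  intro a ha
  obtain ⟨x, rfl⟩ : ∃ x, Abelianization.of x = a := Quot.exists_rep a
  rw [Abelianization.lift_apply_of] at ha
  have h1 : x.1 ∈ commutator G₁ := by
    have : Abelianization.of x.1 = 1 := congrArg Prod.fst ha
    exact (QuotientGroup.eq_one_iff x.1).mp this
  have h2 : x.2 ∈ commutator G₂ := by
    have : Abelianization.of x.2 = 1 := congrArg Prod.snd ha
    exact (QuotientGroup.eq_one_iff x.2).mp this
  have hx : x ∈ commutator (G₁ × G₂) := by
    have hc1 : (commutator G₁).map (MonoidHom.inl G₁ G₂) ≤ commutator (G₁ × G₂) := by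
      rw [commutator, Subgroup.map_commutator]
      exact Subgroup.commutator_mono le_top le_top
    have hc2 : (commutator G₂).map (MonoidHom.inr G₁ G₂) ≤ commutator (G₁ × G₂) := by
      rw [commutator, Subgroup.map_commutator]
      exact Subgroup.commutator_mono le_top le_top
    have : x = (MonoidHom.inl G₁ G₂) x.1 * (MonoidHom.inr G₁ G₂) x.2 := by
      simp [Prod.ext_iff]
    rw [this]
    exact Subgroup.mul_mem _ (hc1 ⟨x.1, h1, rfl⟩) (hc2 ⟨x.2, h2, rfl⟩)
  exact (QuotientGroup.eq_one_iff x).mpr hx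

/-- Every nontrivial finite group has a simple quotient. -/
lemma exists_simple_quotient :
    ∀ (k : ℕ) (Q : Type) [Group Q] [Finite Q] [Nontrivial Q], Nat.card Q ≤ k →
      ∃ (S : Type) (_ : Group S) (φ : Q →* S), Surjective φ ∧ IsSimpleGroup S := by
  intro k
  induction k with
  | zero =>
    intro Q _ _ _ hk
    have := Nat.card_pos (α := Q)
    omega
  | succ k ih =>
    intro Q _ _ _ hk
    by_cases hQ : IsSimpleGroup Q
    · exact ⟨Q, inferInstance, MonoidHom.id Q, surjective_id, hQ⟩
    · have : ∃ N : Subgroup Q, N.Normal ∧ N ≠ ⊥ ∧ N ≠ ⊤ := by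
        by_contra hcon
        push_neg at hcon
        exact hQ ⟨fun N hN => by
          by_cases hb : N = ⊥
          · exact Or.inl hb
          · exact Or.inr (hcon N hN hb)⟩
      obtain ⟨N, hN, hNb, hNt⟩ := this
      have hQN : Nontrivial (Q ⧸ N) := by
        obtain ⟨a, ha⟩ : ∃ a, a ∉ N := by
          by_contra hcon
          push_neg at hcon
          exact hNt ((Subgroup.eq_top_iff' N).mpr hcon)
        exact ⟨⟨QuotientGroup.mk a, 1, by
          simpa [QuotientGroup.eq_one_iff] using ha⟩⟩
      have hcard : Nat.card (Q ⧸ N) < Nat.card Q := by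
        have hmul := Subgroup.card_eq_card_quotient_mul_card_subgroup N
        have hN2 : 2 ≤ Nat.card N := by
          have : Nontrivial N := by
            rcases Subgroup.bot_or_nontrivial N with h | h
            · exact absurd h hNb
            · exact h
          exact Finite.one_lt_card
        have hq : 0 < Nat.card (Q ⧸ N) := Nat.card_pos
        nlinarith
      obtain ⟨S, iS, φ, hφ, hS⟩ := ih (Q ⧸ N) (by omega)
      exact ⟨S, iS, φ.comp (QuotientGroup.mk' N),
        hφ.comp (QuotientGroup.mk'_surjective N), hS⟩

/-- Goursat-type key lemma, half version: `G₁ × 1 ≤ H`. -/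
lemma key_aux {G₁ G₂ : Type} [Group G₁] [Group G₂] [Finite G₁] [Finite G₂]
    (h1 : ∀ (S : Type) [Group S], IsSimpleGroup S → (∃ a b : S, a * b ≠ b * a) →
      ¬ (IsSubquotient S G₁ ∧ IsSubquotient S G₂))
    (h2 : Nat.Coprime (Nat.card (Abelianization G₁)) (Nat.card (Abelianization G₂)))
    (H : Subgroup (G₁ × G₂)) (hH1 : H.map (MonoidHom.fst G₁ G₂) = ⊤)
    (hH2 : H.map (MonoidHom.snd G₁ G₂) = ⊤) :
    H.comap (MonoidHom.inl G₁ G₂) = ⊤ := by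
  set N : Subgroup G₁ := H.comap (MonoidHom.inl G₁ G₂) with hNdef
  have memN : ∀ a : G₁, a ∈ N ↔ ((a, 1) : G₁ × G₂) ∈ H := fun a => Iff.rfl
  have hfst : ∀ g : G₁, ∃ b : G₂, ((g, b) : G₁ × G₂) ∈ H := by
    intro g
    have : g ∈ H.map (MonoidHom.fst G₁ G₂) := hH1 ▸ Subgroup.mem_top g
    obtain ⟨x, hx, hxe⟩ := this
    subst hxe
    exact ⟨x.2, hx⟩
  have hsnd : ∀ b : G₂, ∃ g : G₁, ((g, b) : G₁ × G₂) ∈ H := by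
    intro b
    have : b ∈ H.map (MonoidHom.snd G₁ G₂) := hH2 ▸ Subgroup.mem_top b
    obtain ⟨x, hx, hxe⟩ := this
    subst hxe
    exact ⟨x.1, hx⟩
  have hNnormal : N.Normal := by
    constructor
    intro a ha g
    obtain ⟨b, hgb⟩ := hfst g
    have hmem := H.mul_mem (H.mul_mem hgb ((memN a).mp ha)) (H.inv_mem hgb)
    have heq : ((g, b) : G₁ × G₂) * (a, 1) * (g, b)⁻¹ = (g * a * g⁻¹, 1) := by
      ext <;> simp
    rw [heq] at hmem
    exact (memN _).mpr hmem
  by_contra hN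
  -- the common quotient
  have hQnt : Nontrivial (G₁ ⧸ N) := by
    obtain ⟨a, ha⟩ : ∃ a, a ∉ N := by
      by_contra hcon
      push_neg at hcon
      exact hN ((Subgroup.eq_top_iff' N).mpr hcon)
    exact ⟨⟨QuotientGroup.mk a, 1, by simpa [QuotientGroup.eq_one_iff] using ha⟩⟩
  set π : ↥H →* G₁ ⧸ N := (QuotientGroup.mk' N).comp ((MonoidHom.fst G₁ G₂).comp H.subtype)
    with hπdef
  set ρ : ↥H →* G₂ := (MonoidHom.snd G₁ G₂).comp H.subtype with hρdef
  have hρ : Surjective ρ := by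
    intro b
    obtain ⟨g, hg⟩ := hsnd b
    exact ⟨⟨(g, b), hg⟩, rfl⟩
  have hπ : Surjective π := by
    intro q
    obtain ⟨a, rfl⟩ := QuotientGroup.mk'_surjective N q
    obtain ⟨b, hb⟩ := hfst a
    exact ⟨⟨(a, b), hb⟩, rfl⟩
  have hker : ρ.ker ≤ π.ker := by
    rintro ⟨⟨a, b⟩, hab⟩ h
    have hb1 : b = 1 := h
    subst hb1
    have : a ∈ N := (memN a).mpr hab
    simpa [hπdef, MonoidHom.mem_ker, QuotientGroup.eq_one_iff] using this
  set φ : G₂ →* G₁ ⧸ N :=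
    ρ.liftOfRightInverse (surjInv hρ) (rightInverse_surjInv hρ) ⟨π, hker⟩ with hφdef
  have hφρ : ∀ x : ↥H, φ (ρ x) = π x := fun x =>
    ρ.liftOfRightInverse_comp_apply (surjInv hρ) (rightInverse_surjInv hρ) ⟨π, hker⟩ x
  have hφ : Surjective φ := by
    intro q
    obtain ⟨x, rfl⟩ := hπ q
    exact ⟨ρ x, hφρ x⟩
  obtain ⟨S, iS, ψ, hψ, hS⟩ :=
    exists_simple_quotient (Nat.card (G₁ ⧸ N)) (G₁ ⧸ N) le_rfl
  have hfin : Finite S := Finite.of_surjective _ hψ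
  have sq1 : IsSubquotient S G₁ :=
    isSubquotient_of_surjective (ψ.comp (QuotientGroup.mk' N))
      (hψ.comp (QuotientGroup.mk'_surjective N))
  have sq2 : IsSubquotient S G₂ :=
    isSubquotient_of_surjective (ψ.comp φ) (hψ.comp hφ)
  by_cases hab : ∀ a b : S, a * b = b * a
  · letI : CommGroup S := { (iS : Group S) with mul_comm := hab }
    have d1 : Nat.card S ∣ Nat.card (Abelianization G₁) := by
      set f₁ : G₁ →* S := ψ.comp (QuotientGroup.mk' N)
      refine Subgroup.card_dvd_of_surjective (Abelianization.lift f₁) ?_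
      intro s
      obtain ⟨g, rfl⟩ := (hψ.comp (QuotientGroup.mk'_surjective N)) s
      exact ⟨Abelianization.of g, Abelianization.lift_apply_of _ _⟩
    have d2 : Nat.card S ∣ Nat.card (Abelianization G₂) := by
      set f₂ : G₂ →* S := ψ.comp φ
      refine Subgroup.card_dvd_of_surjective (Abelianization.lift f₂) ?_
      intro s
      obtain ⟨g, rfl⟩ := (hψ.comp hφ) s
      exact ⟨Abelianization.of g, Abelianization.lift_apply_of _ _⟩
    have : Nat.card S = 1 := Nat.eq_one_of_dvd_coprimes h2 d1 d2
    have : Subsingleton S := Nat.card_eq_one_iff_unique.mp this |>.1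
    exact absurd hS.toNontrivial (not_nontrivial_iff_subsingleton.mpr this)
  · push_neg at hab
    obtain ⟨a, b, hab⟩ := hab
    exact h1 S hS ⟨a, b, hab⟩ ⟨sq1, sq2⟩

/-- Goursat's lemma for two factors. -/
lemma key {G₁ G₂ : Type} [Group G₁] [Group G₂] [Finite G₁] [Finite G₂]
    (h1 : ∀ (S : Type) [Group S], IsSimpleGroup S → (∃ a b : S, a * b ≠ b * a) →
      ¬ (IsSubquotient S G₁ ∧ IsSubquotient S G₂))
    (h2 : Nat.Coprime (Nat.card (Abelianization G₁)) (Nat.card (Abelianization G₂)))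
    (H : Subgroup (G₁ × G₂)) (hH1 : H.map (MonoidHom.fst G₁ G₂) = ⊤)
    (hH2 : H.map (MonoidHom.snd G₁ G₂) = ⊤) :
    H = ⊤ := by
  have hinl := key_aux h1 h2 H hH1 hH2
  set e : G₁ × G₂ ≃* G₂ × G₁ := MulEquiv.prodComm
  have hinr : (H.map e.toMonoidHom).comap (MonoidHom.inl G₂ G₁) = ⊤ := by
    refine key_aux (fun S _ hS hnab ⟨s2, s1⟩ => h1 S hS hnab ⟨s1, s2⟩) h2.symm _ ?_ ?_
    · have : (H.map e.toMonoidHom).map (MonoidHom.fst G₂ G₁)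
          = H.map ((MonoidHom.fst G₂ G₁).comp e.toMonoidHom) := Subgroup.map_map H _ _
      rw [this, show (MonoidHom.fst G₂ G₁).comp e.toMonoidHom = MonoidHom.snd G₁ G₂ from
        MonoidHom.ext fun x => rfl, hH2]
    · have : (H.map e.toMonoidHom).map (MonoidHom.snd G₂ G₁)
          = H.map ((MonoidHom.snd G₂ G₁).comp e.toMonoidHom) := Subgroup.map_map H _ _
      rw [this, show (MonoidHom.snd G₂ G₁).comp e.toMonoidHom = MonoidHom.fst G₁ G₂ from
        MonoidHom.ext fun x => rfl, hH1]
  rw [Subgroup.eq_top_iff']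
  intro x
  have hx1 : ((x.1, 1) : G₁ × G₂) ∈ H := by
    have : x.1 ∈ H.comap (MonoidHom.inl G₁ G₂) := hinl ▸ Subgroup.mem_top x.1
    exact this
  have hx2 : ((1, x.2) : G₁ × G₂) ∈ H := by
    have hmem : x.2 ∈ (H.map e.toMonoidHom).comap (MonoidHom.inl G₂ G₁) :=
      hinr ▸ Subgroup.mem_top x.2
    have : ((x.2, 1) : G₂ × G₁) ∈ H.map e.toMonoidHom := hmem
    rw [Subgroup.mem_map_equiv] at this
    exact this
  have : ((x.1, 1) : G₁ × G₂) * (1, x.2) ∈ H := H.mul_mem hx1 hx2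
  simpa using this

/-- Splitting off the first coordinate of a finite product of groups. -/
def piSuccEquiv (n : ℕ) (G : Fin (n + 1) → Type) [∀ i, Group (G i)] :
    (∀ i, G i) ≃* G 0 × (∀ i : Fin n, G i.succ) where
  toFun f := (f 0, fun i => f i.succ)
  invFun p := Fin.cons p.1 p.2
  left_inv f := by
    funext i
    refine Fin.cases ?_ (fun j => ?_) i
    · simp
    · simp
  right_inv p := by
    refine Prod.ext ?_ ?_
    · simp
    · funext j; simp
  map_mul' f g := rfl

lemma isSubquotient_pi :
    ∀ (n : ℕ) (G : Fin n → Type) (_ : ∀ i, Group (G i)) (S : Type) (_ : Group S)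
      (_ : IsSimpleGroup S), IsSubquotient S (∀ i, G i) → ∃ i, IsSubquotient S (G i) := by
  intro n
  induction n with
  | zero =>
    intro G _ S _ hS h
    obtain ⟨M, f, hf⟩ := h
    have : Subsingleton (∀ i : Fin 0, G i) := ⟨fun a b => funext (fun i => i.elim0)⟩
    have : Subsingleton S := hf.subsingleton
    exact absurd hS.toNontrivial (not_nontrivial_iff_subsingleton.mpr this)
  | succ n ih =>
    intro G _ S _ hS h
    have h' := h.of_mulEquiv (piSuccEquiv n G)
    rcases isSubquotient_prod S hS h' with h0 | hrest
    · exact ⟨0, h0⟩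
    · obtain ⟨j, hj⟩ := ih (fun i => G i.succ) _ S _ hS hrest
      exact ⟨j.succ, hj⟩

lemma card_ab_pi_dvd :
    ∀ (n : ℕ) (G : Fin n → Type) (_ : ∀ i, Group (G i)),
      Nat.card (Abelianization (∀ i, G i)) ∣ ∏ i, Nat.card (Abelianization (G i)) := by
  intro n
  induction n with
  | zero =>
    intro G _
    have : Subsingleton (∀ i : Fin 0, G i) := ⟨fun a b => funext (fun i => i.elim0)⟩
    have hs : Subsingleton (Abelianization (∀ i : Fin 0, G i)) :=
      (Quot.mk_surjective).subsingleton
    have h1 : Nat.card (Abelianization (∀ i : Fin 0, G i)) = 1 :=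
      Nat.card_eq_one_iff_unique.mpr ⟨hs, ⟨1⟩⟩
    simp [h1]
  | succ n ih =>
    intro G _
    have step1 : Nat.card (Abelianization (∀ i, G i)) ∣
        Nat.card (Abelianization (G 0 × ∀ i : Fin n, G i.succ)) :=
      abelianization_card_dvd_of_surjective (piSuccEquiv n G).symm.toMonoidHom
        (piSuccEquiv n G).symm.surjective
    refine step1.trans ((card_abelianization_prod_dvd _ _).trans ?_)
    rw [Fin.prod_univ_succ]
    exact Nat.mul_dvd_mul_left _ (ih (fun i => G i.succ) _)

end helpers

/-- Goursat's lemma for several factors. -/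
theorem statement15 (n : ℕ) (G : Fin n → Type) [∀ i, Group (G i)] [∀ i, Finite (G i)]
    (h1 : ∀ i j, i ≠ j → ∀ (S : Type) [Group S], IsSimpleGroup S →
      (∃ a b : S, a * b ≠ b * a) →
      ¬ (IsSubquotient S (G i) ∧ IsSubquotient S (G j)))
    (h2 : ∀ i j, i ≠ j →
      Nat.Coprime (Nat.card (Abelianization (G i))) (Nat.card (Abelianization (G j))))
    (H : Subgroup (∀ i, G i))
    (hH : ∀ i, H.map (Pi.evalMonoidHom G i) = ⊤) :
    H = ⊤ := by
  induction n with
  | zero =>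
    rw [Subgroup.eq_top_iff']
    intro x
    have : x = 1 := funext fun i => i.elim0
    rw [this]; exact H.one_mem
  | succ n ih =>
    set e := piSuccEquiv n G with he
    set H' := H.map e.toMonoidHom with hH'
    -- surjectivity onto first factor
    have hfst : H'.map (MonoidHom.fst _ _) = ⊤ := by
      rw [hH', Subgroup.map_map,
        show (MonoidHom.fst _ _).comp e.toMonoidHom = Pi.evalMonoidHom G 0 from
          MonoidHom.ext fun x => rfl]
      exact hH 0
    -- the projection to the rest is everything, by induction
    have hsnd : H'.map (MonoidHom.snd _ _) = ⊤ := by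
      refine ih (fun i => G i.succ)
        (fun i j hij => h1 i.succ j.succ (fun hc => hij (Fin.succ_injective n hc)))
        (fun i j hij => h2 i.succ j.succ (fun hc => hij (Fin.succ_injective n hc)))
        (H'.map (MonoidHom.snd _ _)) ?_
      intro j
      rw [hH', Subgroup.map_map, Subgroup.map_map,
        show ((Pi.evalMonoidHom (fun i => G i.succ) j).comp
            (MonoidHom.snd _ _)).comp e.toMonoidHom = Pi.evalMonoidHom G j.succ from
          MonoidHom.ext fun x => rfl]
      exact hH j.succ
    have hkey : H' = ⊤ := by
      refine key ?_ ?_ H' hfst hsnd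
      · intro S _ hS hnab ⟨s0, srest⟩
        obtain ⟨j, hj⟩ := isSubquotient_pi n (fun i => G i.succ) _ S _ hS srest
        exact h1 0 j.succ (Ne.symm (Fin.succ_ne_zero j)) S hS hnab ⟨s0, hj⟩
      · refine Nat.Coprime.coprime_dvd_right (card_ab_pi_dvd n (fun i => G i.succ) _) ?_
        exact Nat.Coprime.prod_right fun j _ => h2 0 j.succ (Ne.symm (Fin.succ_ne_zero j))
    have := congrArg (Subgroup.comap e.toMonoidHom) hkey
    rwa [Subgroup.comap_map_eq_self_of_injective e.injective, Subgroup.comap_top] at this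
end
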